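/- arXiv:1712.08660 — 5 statements merged into one kernel-verified Lean document; each statement's English description precedes it below -/
import Mathlib

section
/- Let T ∈ F^(I×J×K) with K = {1,…,k} ∪ {1',…,k'}, let S_i denote the i-th 3-slice of T, and let V be the F-linear span of S_{1'},…,S_{k'}. Then rank_F(T) ≥ min{rank_F(T') : T' ∈ T mod (0,0,V)} + dim V, where T mod (0,0,V) is the set of tensors obtained from the restriction of T to I×J×{1,…,k} by adding elements of V to its 3-slices. -/
open Finset Matrix

section auxiliary

variable {F : Type*} [Field F]

/-- From a linearly independent family `u` of `d` vectors in `F^r` one can select `d`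
coordinates (via an injection `σ`) and find a "dual" family `w` inside the span of `u`
with `w m (σ m') = δ_{m m'}`. -/
lemma exists_dual_family_aux {d r : ℕ} (u : Fin d → Fin r → F)
    (hu : LinearIndependent F u) :
    ∃ σ : Fin d → Fin r, Function.Injective σ ∧ ∃ w : Fin d → Fin r → F,
      (∀ m, w m ∈ Submodule.span F (Set.range u)) ∧
      ∀ m m', w m (σ m') = if m = m' then 1 else 0 := by
  classical
  set A : Matrix (Fin d) (Fin r) F := Matrix.of u with hA
  -- columns of A span F^d
  have hAT : Submodule.span F (Set.range Aᵀ) = ⊤ := by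
    have h1 : Aᵀ.rank = d := by
      rw [Matrix.rank, Matrix.range_mulVecLin]
      rw [show Set.range Aᵀ.col = Set.range u from rfl, finrank_span_eq_card hu, Fintype.card_fin]
    have h2 : A.rank = d := by rw [← Matrix.rank_transpose]; exact h1
    have h3 : Module.finrank F (LinearMap.range A.mulVecLin) = d := h2
    have h4 := Submodule.eq_top_of_finrank_eq (K := F)
      (S := LinearMap.range A.mulVecLin)
      (by rw [h3, Module.finrank_fintype_fun_eq_card, Fintype.card_fin])
    rw [Matrix.range_mulVecLin] at h4
    exact h4
  -- choose a linearly independent spanning subset of the columns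
  obtain ⟨bs, hbs_sub, hbs_span, hbs_li⟩ := exists_linearIndependent F (Set.range Aᵀ)
  rw [hAT] at hbs_span
  have hfd : FiniteDimensional F (Fin d → F) := inferInstance
  have hbfin : bs.Finite := hbs_li.setFinite
  haveI : Fintype bs := hbfin.fintype
  have hcard : Fintype.card bs = d := by
    let B : Module.Basis bs F (Fin d → F) := Module.Basis.mk hbs_li (by simp [Subtype.range_coe, hbs_span])
    rw [← Module.finrank_eq_card_basis B, Module.finrank_fintype_fun_eq_card, Fintype.card_fin]
  let e : Fin d ≃ bs := (Fintype.equivFinOfCardEq hcard).symm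
  have hsel : ∀ x : bs, ∃ t : Fin r, Aᵀ t = (x : Fin d → F) := fun x => hbs_sub x.2
  choose σ0 hσ0 using hsel
  have hσ0inj : Function.Injective σ0 := by
    intro x y hxy
    apply Subtype.ext
    rw [← hσ0 x, ← hσ0 y, hxy]
  set σ : Fin d → Fin r := fun m => σ0 (e m) with hσdef
  have hσinj : Function.Injective σ := hσ0inj.comp e.injective
  -- the square submatrix
  set B : Matrix (Fin d) (Fin d) F := fun m m' => u m (σ m') with hBdef
  have hBcol : ∀ m', Bᵀ m' = ((e m' : bs) : Fin d → F) := by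
    intro m'
    funext m
    rw [← hσ0 (e m')]
    rfl
  have hBunit : IsUnit B := by
    rw [← Matrix.linearIndependent_cols_iff_isUnit]
    have : (fun m' => Bᵀ m') = (fun x : bs => (x : Fin d → F)) ∘ e := by
      funext m'; exact hBcol m'
    show LinearIndependent F (fun m' => Bᵀ m')
    rw [this]
    exact hbs_li.comp e e.injective
  have hinv : B⁻¹ * B = 1 := Matrix.nonsing_inv_mul B (Matrix.isUnit_iff_isUnit_det B |>.mp hBunit)
  refine ⟨σ, hσinj, fun m => ∑ m'', B⁻¹ m m'' • u m'', ?_, ?_⟩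
  · intro m
    exact Submodule.sum_mem _ fun m'' _ =>
      Submodule.smul_mem _ _ (Submodule.subset_span ⟨m'', rfl⟩)
  · intro m m'
    have : (∑ m'', B⁻¹ m m'' • u m'') (σ m') = ∑ m'', B⁻¹ m m'' * B m'' m' := by
      simp [Finset.sum_apply]
      rfl
    show (∑ m'' : Fin d, B⁻¹ m m'' • u m'') (σ m') = _
    rw [this, ← Matrix.mul_apply, hinv, Matrix.one_apply]

variable {I J K : Type*} [Fintype I] [Fintype J] [Fintype K]

/-- Every tensor over finite index types has some rank decomposition. -/
lemma trank_set_nonempty_aux (T : I → J → K → F) :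
    {r | ∃ a : Fin r → I → F, ∃ b : Fin r → J → F, ∃ c : Fin r → K → F,
      ∀ i j k, T i j k = ∑ t, a t i * b t j * c t k}.Nonempty := by
  classical
  refine ⟨Fintype.card (I × J × K), ?_⟩
  set e : Fin (Fintype.card (I × J × K)) ≃ I × J × K := (Fintype.equivFin (I × J × K)).symm
  refine ⟨fun t i => if (e t).1 = i then T (e t).1 (e t).2.1 (e t).2.2 else 0,
    fun t j => if (e t).2.1 = j then 1 else 0,
    fun t κ => if (e t).2.2 = κ then 1 else 0, ?_⟩
  intro i j κ
  show T i j κ = ∑ t, (if (e t).1 = i then T (e t).1 (e t).2.1 (e t).2.2 else 0) *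
      (if (e t).2.1 = j then 1 else 0) * (if (e t).2.2 = κ then 1 else 0)
  rw [Equiv.sum_comp e (fun p : I × J × K =>
    (if p.1 = i then T p.1 p.2.1 p.2.2 else 0) * (if p.2.1 = j then 1 else 0) *
      (if p.2.2 = κ then 1 else 0))]
  have h : ∀ p : I × J × K,
      (if p.1 = i then T p.1 p.2.1 p.2.2 else 0) * (if p.2.1 = j then 1 else 0) *
        (if p.2.2 = κ then 1 else 0) = if p = (i, j, κ) then T i j κ else 0 := by
    rintro ⟨x, y, z⟩
    by_cases hx : x = i <;> by_cases hy : y = j <;> by_cases hz : z = κ <;>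
      simp [hx, hy, hz, Prod.ext_iff]
  simp_rw [h]
  simp

/-- The main computation, stated for an arbitrary decomposition of length `r`. -/
theorem key_lemma_aux {F I J : Type*} [Field F] [Fintype I] [Fintype J]
    {k k' : ℕ} (T : I → J → (Fin k ⊕ Fin k') → F)
    (V : Submodule F (I → J → F))
    (hV : V = Submodule.span F (Set.range fun κ' : Fin k' => fun i j => T i j (Sum.inr κ')))
    (r : ℕ) (a : Fin r → I → F) (b : Fin r → J → F) (c : Fin r → (Fin k ⊕ Fin k') → F)
    (hT : ∀ i j κ, T i j κ = ∑ t, a t i * b t j * c t κ)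
    (trankF : (I → J → Fin k → F) → ℕ)
    (htrankF : ∀ T' : I → J → Fin k → F, trankF T' =
      sInf {m | ∃ a : Fin m → I → F, ∃ b : Fin m → J → F, ∃ c : Fin m → Fin k → F,
        ∀ i j κ, T' i j κ = ∑ t, a t i * b t j * c t κ}) :
    sInf {n | ∃ T' : I → J → Fin k → F,
        (∀ κ : Fin k, (fun i j => T' i j κ - T i j (Sum.inl κ)) ∈ V) ∧ trankF T' = n}
      + Module.finrank F V ≤ r := by
  classical
  set L : (Fin r → F) →ₗ[F] (I → J → F) :=
    { toFun := fun x => fun i j => ∑ t, x t * (a t i * b t j)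
      map_add' := by
        intro x y
        funext i j
        simp [add_mul, Finset.sum_add_distrib]
      map_smul' := by
        intro s x
        funext i j
        simp [Finset.mul_sum, mul_assoc] } with hL
  have hLapp : ∀ x i j, L x i j = ∑ t, x t * (a t i * b t j) := fun x i j => rfl
  have hslice : ∀ κ : Fin k ⊕ Fin k',
      (fun i j => T i j κ) = L (fun t => c t κ) := by
    intro κ
    funext i j
    rw [hLapp, hT i j κ]
    exact Finset.sum_congr rfl fun t _ => by ring
  set v : Fin k' → Fin r → F := fun κ' t => c t (Sum.inr κ') with hv
  have hVmap : V = (Submodule.span F (Set.range v)).map L := by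
    have h0 : (fun κ' : Fin k' => fun i j => T i j (Sum.inr κ')) = ⇑L ∘ v :=
      funext fun κ' => hslice (Sum.inr κ')
    rw [hV, h0, Set.range_comp, ← Submodule.map_span]
  set d := Module.finrank F V with hd
  have hfd : FiniteDimensional F V := inferInstance
  set w' := Module.finBasis F V with hw'
  have hmem : ∀ m : Fin d, ∃ x, x ∈ Submodule.span F (Set.range v) ∧
      L x = (w' m : I → J → F) := by
    intro m
    have h2 : ((w' m : I → J → F)) ∈ (Submodule.span F (Set.range v)).map L := by
      rw [← hVmap]; exact (w' m).2
    obtain ⟨x, hx1, hx2⟩ := Submodule.mem_map.mp h2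
    exact ⟨x, hx1, hx2⟩
  choose u hu hLu using hmem
  have huli : LinearIndependent F u := by
    apply LinearIndependent.of_comp L
    have : ⇑L ∘ u = (V.subtype : V →ₗ[F] _) ∘ w' := by
      funext m; exact hLu m
    rw [this]
    exact (w'.linearIndependent).map' V.subtype V.ker_subtype
  obtain ⟨σ, hσ, w, hwmem, hwdual⟩ := exists_dual_family_aux u huli
  have hdr : d ≤ r := by
    have := Fintype.card_le_of_injective σ hσ
    simpa using this
  have hwV : ∀ m, L (w m) ∈ V := by
    intro m
    have hsub : Submodule.span F (Set.range u) ≤ Submodule.span F (Set.range v) := by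
      rw [Submodule.span_le]
      rintro _ ⟨m', rfl⟩
      exact hu m'
    rw [hVmap]
    exact Submodule.mem_map_of_mem (hsub (hwmem m))
  set x : Fin k → Fin r → F :=
    fun κ => (fun t => c t (Sum.inl κ)) - ∑ m, c (σ m) (Sum.inl κ) • w m with hx
  have hxzero : ∀ κ m', x κ (σ m') = 0 := by
    intro κ m'
    have h1 : x κ (σ m') = c (σ m') (Sum.inl κ) - ∑ m, c (σ m) (Sum.inl κ) * w m (σ m') := by
      simp [hx, Finset.sum_apply]
    rw [h1]
    have h2 : ∀ m, c (σ m) (Sum.inl κ) * w m (σ m') =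
        if m = m' then c (σ m) (Sum.inl κ) else 0 := by
      intro m
      rw [hwdual m m']
      split <;> simp
    simp_rw [h2]
    simp
  set T' : I → J → Fin k → F := fun i j κ => L (x κ) i j with hT'
  have hcond : ∀ κ : Fin k, (fun i j => T' i j κ - T i j (Sum.inl κ)) ∈ V := by
    intro κ
    have hLx : L (x κ) = (fun i j => T i j (Sum.inl κ))
        - ∑ m, c (σ m) (Sum.inl κ) • L (w m) := by
      rw [hx, map_sub, map_sum]
      simp_rw [_root_.map_smul]
      rw [← hslice (Sum.inl κ)]
    have heq : (fun i j => T' i j κ - T i j (Sum.inl κ)) =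
        - ∑ m, c (σ m) (Sum.inl κ) • L (w m) := by
      funext i j
      have h5 := congrFun (congrFun hLx i) j
      simp only [Pi.sub_apply] at h5
      show T' i j κ - T i j (Sum.inl κ) = _
      rw [show T' i j κ = L (x κ) i j from rfl, h5]
      simp only [Pi.neg_apply]
      ring
    rw [heq]
    exact neg_mem (Submodule.sum_mem _ fun m _ => Submodule.smul_mem _ _ (hwV m))
  have hcompl : Fintype.card {t : Fin r // t ∉ Set.range σ} = r - d := by
    rw [Fintype.card_subtype_compl]
    have h6 : Fintype.card {t : Fin r // t ∈ Set.range σ} = d :=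
      (Fintype.card_congr (Equiv.ofInjective σ hσ)).symm.trans (Fintype.card_fin d)
    rw [h6, Fintype.card_fin]
  set e2 : Fin (r - d) ≃ {t : Fin r // t ∉ Set.range σ} :=
    (Fintype.equivFinOfCardEq hcompl).symm with he2
  have hrank : trankF T' ≤ r - d := by
    rw [htrankF]
    refine Nat.sInf_le ⟨fun s i => a (e2 s).1 i, fun s j => b (e2 s).1 j,
      fun s κ => x κ (e2 s).1, ?_⟩
    intro i j κ
    have h1 : T' i j κ = ∑ t, x κ t * (a t i * b t j) := hLapp _ i j
    show T' i j κ = _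
    rw [h1]
    have h2 : ∑ t, x κ t * (a t i * b t j)
        = ∑ t ∈ Finset.univ.filter (fun t => t ∉ Set.range σ), x κ t * (a t i * b t j) := by
      symm
      apply Finset.sum_subset (Finset.filter_subset _ _)
      intro t _ ht
      simp only [Finset.mem_filter, Finset.mem_univ, true_and, not_not] at ht
      obtain ⟨m', rfl⟩ := ht
      rw [hxzero κ m', zero_mul]
    rw [h2]
    rw [Finset.sum_subtype (p := fun t => t ∉ Set.range σ)
      (Finset.univ.filter (fun t => t ∉ Set.range σ)) (by simp)
      (fun t => x κ t * (a t i * b t j))]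
    rw [← Equiv.sum_comp e2 (fun s : {t : Fin r // t ∉ Set.range σ} =>
      x κ s.1 * (a s.1 i * b s.1 j))]
    exact Finset.sum_congr rfl fun s _ => by ring
  have hfinal : sInf {n | ∃ T'' : I → J → Fin k → F,
      (∀ κ : Fin k, (fun i j => T'' i j κ - T i j (Sum.inl κ)) ∈ V) ∧ trankF T'' = n}
      ≤ trankF T' := Nat.sInf_le ⟨T', hcond, rfl⟩
  calc sInf _ + d ≤ (r - d) + d := add_le_add_left (le_trans hfinal hrank) d
    _ = r := Nat.sub_add_cancel hdr

end auxiliary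

/-- The rank of a tensor `T : I → J → K → F`: the least `r` such that `T` is a sum of `r`
decomposable tensors. -/
noncomputable def trank (F : Type*) [Field F] {I J K : Type*} (T : I → J → K → F) : ℕ :=
  sInf {r | ∃ a : Fin r → I → F, ∃ b : Fin r → J → F, ∃ c : Fin r → K → F,
    ∀ i j k, T i j k = ∑ t, a t i * b t j * c t k}

/-- The tensor rank is attained by some decomposition (over finite index types). -/
lemma trank_spec_aux {F I J K : Type*} [Field F] [Fintype I] [Fintype J] [Fintype K]
    (T : I → J → K → F) :
    ∃ a : Fin (trank F T) → I → F, ∃ b : Fin (trank F T) → J → F,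
      ∃ c : Fin (trank F T) → K → F,
      ∀ i j k, T i j k = ∑ t, a t i * b t j * c t k :=
  Nat.sInf_mem (trank_set_nonempty_aux T)

/-- Slice elimination (lower bound): if `V` is the span of the 3-slices of `T` indexed by the
primed part `Fin k'` of `K = Fin k ⊕ Fin k'`, then
`rank T ≥ min { rank T' : T' ∈ T mod (0,0,V) } + dim V`. -/
theorem trank_ge_min_mod_add_dim {F I J : Type*} [Field F] [Fintype I] [Fintype J]
    {k k' : ℕ} (T : I → J → (Fin k ⊕ Fin k') → F)
    (V : Submodule F (I → J → F))
    (hV : V = Submodule.span F (Set.range fun κ' : Fin k' => fun i j => T i j (Sum.inr κ'))) :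
    sInf {r | ∃ T' : I → J → Fin k → F,
        (∀ κ : Fin k, (fun i j => T' i j κ - T i j (Sum.inl κ)) ∈ V) ∧ trank F T' = r}
      + Module.finrank F V ≤ trank F T := by
  obtain ⟨a, b, c, hT⟩ := trank_spec_aux T
  exact key_lemma_aux T V hV (trank F T) a b c hT (trank F) (fun T' => rfl)
end

section
/- With the notation of the slice-elimination lemma, if additionally each of the slices S_{1'},…,S_{k'} is a rank-one matrix, then rank_F(T) = min{rank_F(T') : T' ∈ T mod (0,0,V)} + dim V. -/
open Module Submodule

lemma decomp_nonempty {F : Type*} [Field F] {I J K : Type*} [Fintype I] [Fintype J]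
    [DecidableEq I] [DecidableEq J] (T : I → J → K → F) :
    {r | ∃ a : Fin r → I → F, ∃ b : Fin r → J → F, ∃ c : Fin r → K → F,
      ∀ i j k, T i j k = ∑ t, a t i * b t j * c t k}.Nonempty := by
  classical
  refine ⟨Fintype.card (I × J), ?_⟩
  set e := (Fintype.equivFin (I × J)).symm with he
  refine ⟨fun t i => if (e t).1 = i then 1 else 0,
    fun t j => if (e t).2 = j then 1 else 0,
    fun t kk => T (e t).1 (e t).2 kk, fun i j kk => ?_⟩
  rw [← Equiv.sum_comp e.symm (fun t => _)]
  simp only [Equiv.apply_symm_apply]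
  rw [Fintype.sum_prod_type]
  simp [Finset.sum_ite_eq, Finset.mem_univ]

lemma trank_le {F : Type*} [Field F] {I J K : Type*} {r : ℕ} {T : I → J → K → F}
    (a : Fin r → I → F) (b : Fin r → J → F) (c : Fin r → K → F)
    (h : ∀ i j k, T i j k = ∑ t, a t i * b t j * c t k) : trank F T ≤ r :=
  Nat.sInf_le ⟨a, b, c, h⟩

lemma exists_trank_decomp {F : Type*} [Field F] {I J K : Type*} [Fintype I] [Fintype J]
    [DecidableEq I] [DecidableEq J] (T : I → J → K → F) :
    ∃ a : Fin (trank F T) → I → F, ∃ b : Fin (trank F T) → J → F,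
      ∃ c : Fin (trank F T) → K → F, ∀ i j k, T i j k = ∑ t, a t i * b t j * c t k :=
  Nat.sInf_mem (decomp_nonempty T)

lemma rank_one_factor {F : Type*} [Field F] {I J : Type*} [Fintype I] [Fintype J]
    [DecidableEq I] [DecidableEq J] (M : I → J → F)
    (h : (Matrix.of M).rank = 1) : ∃ u : I → F, ∃ v : J → F, ∀ i j, M i j = u i * v j := by
  classical
  have hfr : finrank F (LinearMap.range (Matrix.of M).mulVecLin) = 1 := h
  obtain ⟨w, hw0, hw⟩ := finrank_eq_one_iff'.mp hfr
  choose cfun hc using fun j =>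
    hw ⟨(Matrix.of M).mulVecLin (Pi.single j 1), LinearMap.mem_range_self _ _⟩
  refine ⟨fun i => (w : I → F) i, cfun, fun i j => ?_⟩
  have h2 := congrFun (congrArg Subtype.val (hc j)) i
  simp [Matrix.mulVecLin_apply, Matrix.mulVec_single] at h2
  rw [← h2]; ring

lemma selection {F : Type*} [Field F] {d r : ℕ} (p : Fin d → Fin r → F)
    (hp : LinearIndependent F p) :
    ∃ G : Finset (Fin r), G.card = d ∧
      ∀ y : Fin r → F, ∃ lam : Fin d → F, ∀ t ∈ G, y t = ∑ s, lam s * p s t := by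
  classical
  set M : Matrix (Fin d) (Fin r) F := Matrix.of p with hM
  have hinj : Function.Injective M.transpose.mulVecLin := by
    rw [← LinearMap.ker_eq_bot, LinearMap.ker_eq_bot']
    intro lam hlam
    have h0 : ∑ s, lam s • p s = 0 := by
      funext t
      have h1 := congrFun hlam t
      simp only [Matrix.mulVecLin_apply, Matrix.mulVec, dotProduct,
        Matrix.transpose_apply, Pi.zero_apply] at h1
      simp only [Finset.sum_apply, Pi.smul_apply, smul_eq_mul, Pi.zero_apply]
      rw [← h1]
      exact Finset.sum_congr rfl fun s _ => mul_comm _ _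
    funext s
    exact Fintype.linearIndependent_iff.mp hp lam h0 s
  have hrkT : M.transpose.rank = d := by
    rw [Matrix.rank, LinearMap.finrank_range_of_inj hinj, Module.finrank_fin_fun]
  have hrk : M.rank = d := by rw [← Matrix.rank_transpose]; exact hrkT
  have htop : span F (Set.range M.transpose) = ⊤ := by
    rw [show Set.range M.transpose = Set.range M.col from rfl, ← Matrix.range_mulVecLin]
    apply eq_top_of_finrank_eq
    rw [Module.finrank_fin_fun]
    exact hrk
  obtain ⟨b, hbsub, hbspan, hbind⟩ := exists_linearIndependent F (Set.range M.transpose)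
  rw [htop] at hbspan
  haveI : Fintype b := hbind.setFinite.fintype
  have hcard : b.toFinset.card = d := by
    have h3 := finrank_span_set_eq_card (R := F) hbind
    rw [hbspan, finrank_top, Module.finrank_fin_fun] at h3
    omega
  choose tf htf using fun x : b => hbsub x.2
  have tfinj : Function.Injective tf := by
    intro x1 x2 h
    apply Subtype.ext
    rw [← htf x1, ← htf x2, h]
  refine ⟨Finset.univ.image tf, ?_, ?_⟩
  · rw [Finset.card_image_of_injective _ tfinj, Finset.card_univ, ← Set.toFinset_card, hcard]
  · intro y
    set Φ : (Fin d → F) →ₗ[F] (↥b → F) :=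
      { toFun := fun lam x => ∑ s, lam s * (x : Fin d → F) s
        map_add' := by
          intro u v; funext x; simp [add_mul, Finset.sum_add_distrib]
        map_smul' := by
          intro a u; funext x; simp [Finset.mul_sum, mul_assoc] } with hΦ
    have Φinj : Function.Injective Φ := by
      rw [← LinearMap.ker_eq_bot, LinearMap.ker_eq_bot']
      intro lam hlam
      set g : (Fin d → F) →ₗ[F] F :=
        { toFun := fun w => ∑ s, lam s * w s
          map_add' := by intro u v; simp [mul_add, Finset.sum_add_distrib]
          map_smul' := by
            intro a u
            simp only [smul_eq_mul, RingHom.id_apply, Finset.mul_sum, Pi.smul_apply]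
            exact Finset.sum_congr rfl fun s _ => by ring } with hg
      have hgb : ∀ w, g w = 0 := by
        have hle : span F b ≤ LinearMap.ker g := by
          rw [span_le]
          intro x hx
          exact congrFun hlam ⟨x, hx⟩
        rw [hbspan] at hle
        intro w
        exact hle (mem_top)
      funext s
      have := hgb (Pi.single s 1)
      simpa [hg, Pi.single_apply, Finset.sum_ite_eq'] using this
    have hdim : finrank F (Fin d → F) = finrank F (↥b → F) := by
      rw [Module.finrank_fin_fun, Module.finrank_pi, ← Set.toFinset_card, hcard]
    set e := Φ.linearEquivOfInjective Φinj hdim with he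
    set lam := e.symm (fun x => y (tf x)) with hlam
    have hΦlam : Φ lam = fun x => y (tf x) := by
      rw [← LinearMap.linearEquivOfInjective_apply (hf := Φinj) (hdim := hdim), ← he, hlam]
      exact e.apply_symm_apply _
    refine ⟨lam, fun t ht => ?_⟩
    obtain ⟨x, -, hx⟩ := Finset.mem_image.mp ht
    have h1 : y t = Φ lam x := by rw [hΦlam]; exact congrArg y hx.symm
    rw [h1, hΦ]
    have h2 : (x : Fin d → F) = fun s => p s t := by rw [← hx]; exact (htf x).symm
    simp only [LinearMap.coe_mk, AddHom.coe_mk, h2]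

lemma rank_one_coords {F I J : Type*} [Field F] [Fintype I] [Fintype J]
    [DecidableEq I] [DecidableEq J]
    {k' : ℕ} (S : Fin k' → I → J → F) (V : Submodule F (I → J → F))
    (hV : V = Submodule.span F (Set.range S))
    (hrk : ∀ κ', (Matrix.of (S κ')).rank = 1) :
    ∃ u : Fin (finrank F V) → I → F, ∃ v : Fin (finrank F V) → J → F,
      ∀ x ∈ V, ∃ μ : Fin (finrank F V) → F, ∀ i j, x i j = ∑ s, μ s * u s i * v s j := by
  classical
  obtain ⟨b, hbsub, hbspan, hbind⟩ := exists_linearIndependent F (Set.range S)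
  rw [← hV] at hbspan
  haveI : Fintype b := hbind.setFinite.fintype
  have hcard : Fintype.card b = finrank F V := by
    have h3 := finrank_span_set_eq_card (R := F) hbind
    rw [hbspan, Set.toFinset_card] at h3
    omega
  set g := (Fintype.equivFinOfCardEq hcard).symm with hgdef
  have hfac : ∀ s : Fin (finrank F V), ∃ u : I → F, ∃ v : J → F,
      ∀ i j, (g s : I → J → F) i j = u i * v j := by
    intro s
    obtain ⟨κ', hκ'⟩ := hbsub (g s).2
    obtain ⟨u, v, huv⟩ := rank_one_factor (S κ') (hrk κ')
    exact ⟨u, v, fun i j => by rw [← hκ']; exact huv i j⟩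
  choose u v huv using hfac
  refine ⟨u, v, fun x hx => ?_⟩
  have hbeq : Set.range (fun s => (g s : I → J → F)) = b := by
    have h4 : Set.range (Subtype.val ∘ ⇑g) = Set.range (Subtype.val : b → (I → J → F)) :=
      g.surjective.range_comp _
    rw [show (Set.range fun s => (g s : I → J → F)) = Set.range (Subtype.val ∘ ⇑g) from rfl,
      h4, Subtype.range_coe]
  have hx2 : x ∈ span F (Set.range fun s => (g s : I → J → F)) := by
    rw [hbeq, hbspan]; exact hx
  obtain ⟨μ, hμ⟩ := (mem_span_range_iff_exists_fun F).mp hx2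
  refine ⟨μ, fun i j => ?_⟩
  have h5 := congrFun (congrFun hμ i) j
  rw [← h5]
  rw [Finset.sum_apply, Finset.sum_apply]
  exact Finset.sum_congr rfl fun s _ => by
    simp only [Pi.smul_apply, smul_eq_mul, huv s i j]; ring

/-- Slice elimination (equality case): if moreover the adjoined 3-slices `S_{1'},…,S_{k'}` are
rank-one matrices, then `rank T = min { rank T' : T' ∈ T mod (0,0,V) } + dim V`. -/
theorem trank_eq_min_mod_add_dim {F I J : Type*} [Field F] [Fintype I] [Fintype J]
    [DecidableEq I] [DecidableEq J]
    {k k' : ℕ} (T : I → J → (Fin k ⊕ Fin k') → F)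
    (V : Submodule F (I → J → F))
    (hV : V = Submodule.span F (Set.range fun κ' : Fin k' => fun i j => T i j (Sum.inr κ')))
    (hrk : ∀ κ' : Fin k', (Matrix.of fun i j => T i j (Sum.inr κ')).rank = 1) :
    trank F T = sInf {r | ∃ T' : I → J → Fin k → F,
        (∀ κ : Fin k, (fun i j => T' i j κ - T i j (Sum.inl κ)) ∈ V) ∧ trank F T' = r}
      + Module.finrank F V := by
  classical
  set d := Module.finrank F V with hd
  set Mset := {r | ∃ T' : I → J → Fin k → F,
      (∀ κ : Fin k, (fun i j => T' i j κ - T i j (Sum.inl κ)) ∈ V) ∧ trank F T' = r}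
    with hMset
  have hMne : Mset.Nonempty := by
    refine ⟨trank F (fun i j κ => T i j (Sum.inl κ)),
      (fun i j κ => T i j (Sum.inl κ)), fun κ => ?_, rfl⟩
    have h0 : (fun i j => T i j (Sum.inl κ) - T i j (Sum.inl κ)) = (0 : I → J → F) := by
      funext i j; simp
    rw [h0]; exact V.zero_mem
  -- rank-one coordinates for V
  obtain ⟨u, v, hcoords⟩ := rank_one_coords (fun κ' i j => T i j (Sum.inr κ')) V hV hrk
  -- Direction ≤
  have hle : trank F T ≤ sInf Mset + d := by
    obtain ⟨T', hT'mem, hT'rank⟩ := Nat.sInf_mem hMne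
    obtain ⟨a, b, c, hdec⟩ := exists_trank_decomp T'
    choose mu hmu using fun κ : Fin k => hcoords _ (hT'mem κ)
    have hslice : ∀ κ' : Fin k', (fun i j => T i j (Sum.inr κ')) ∈ V := by
      intro κ'
      rw [hV]
      exact subset_span ⟨κ', rfl⟩
    choose nu hnu using fun κ' : Fin k' => hcoords _ (hslice κ')
    have hdecT : ∀ i j kk, T i j kk =
        ∑ t : Fin (trank F T' + d),
          (Fin.addCases (motive := fun _ => I → F) a u t) i *
          (Fin.addCases (motive := fun _ => J → F) b v t) j *
          (Fin.addCases (motive := fun _ => (Fin k ⊕ Fin k') → F) (fun t' => Sum.elim (c t') 0)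
            (fun s => Sum.elim (fun κ => - mu κ s) (fun κ' => nu κ' s)) t) kk := by
      intro i j kk
      rw [Fin.sum_univ_add]
      simp only [show ∀ t : Fin (trank F T'), (Fin.castAdd d t : Fin (trank F T' + finrank F V))
          = Fin.castAdd (finrank F V) t from fun _ => rfl, Fin.addCases_left, Fin.addCases_right]
      cases kk with
      | inl κ =>
        simp only [Sum.elim_inl]
        have h4 := hmu κ i j
        have hsum : (∑ s, u s i * v s j * (- mu κ s))
            + (∑ s, mu κ s * u s i * v s j) = 0 := by
          rw [← Finset.sum_add_distrib]
          exact Finset.sum_eq_zero fun s _ => by ring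
        have h5 : (∑ t, a t i * b t j * c t κ) = T' i j κ := (hdec i j κ).symm
        rw [h5]
        linear_combination - h4 - hsum
      | inr κ' =>
        simp only [Sum.elim_inr]
        have h6 := hnu κ' i j
        have h7 : (∑ t : Fin (trank F T'), a t i * b t j * (0 : Fin k' → F) κ') = 0 := by
          simp
        rw [h7, zero_add]
        rw [h6]
        exact Finset.sum_congr rfl fun s _ => by ring
    calc trank F T ≤ trank F T' + d := trank_le _ _ _ hdecT
      _ = sInf Mset + d := by rw [hT'rank]
  -- Direction ≥
  have hge : sInf Mset + d ≤ trank F T := by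
    obtain ⟨a, b, c, hdec⟩ := exists_trank_decomp T
    set Lmap : (Fin (trank F T) → F) →ₗ[F] (I → J → F) :=
      { toFun := fun x i j => ∑ t, x t * (a t i * b t j)
        map_add' := by
          intro x y; funext i j
          simp [add_mul, Finset.sum_add_distrib]
        map_smul' := by
          intro e x; funext i j
          simp only [Pi.smul_apply, smul_eq_mul, RingHom.id_apply, Finset.mul_sum]
          exact Finset.sum_congr rfl fun t _ => by ring } with hLmap
    have hVle : V ≤ LinearMap.range Lmap := by
      rw [hV, span_le]
      rintro x ⟨κ', rfl⟩
      refine ⟨fun t => c t (Sum.inr κ'), ?_⟩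
      funext i j
      show ∑ t, c t (Sum.inr κ') * (a t i * b t j) = T i j (Sum.inr κ')
      rw [hdec i j (Sum.inr κ')]
      exact Finset.sum_congr rfl fun t _ => by ring
    haveI : FiniteDimensional F V := inferInstance
    set eV := Module.finBasis F V with heV
    choose p hp using fun s : Fin d => LinearMap.mem_range.mp (hVle (eV s).2)
    have hpind : LinearIndependent F p := by
      have h6 : LinearIndependent F (fun s : Fin d => ((eV s : I → J → F))) :=
        (eV.linearIndependent).map' V.subtype (ker_subtype V)
      have h7 : (fun s : Fin d => (eV s : I → J → F)) = Lmap ∘ p := by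
        funext s; rw [← hp s]; rfl
      rw [h7] at h6
      exact LinearIndependent.of_comp Lmap h6
    have hdr : d ≤ trank F T := by
      have h8 := hpind.fintype_card_le_finrank
      simpa [Module.finrank_fin_fun] using h8
    obtain ⟨G, hGcard, hsolve⟩ := selection p hpind
    choose lam hlam using fun κ : Fin k => hsolve (fun t => c t (Sum.inl κ))
    set c2 : Fin k → Fin (trank F T) → F :=
      fun κ t => c t (Sum.inl κ) - ∑ s, lam κ s * p s t with hc2
    set T2 : I → J → Fin k → F := fun i j κ => ∑ t, a t i * b t j * c2 κ t with hT2
    -- membership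
    have hmem : ∀ κ : Fin k, (fun i j => T2 i j κ - T i j (Sum.inl κ)) ∈ V := by
      intro κ
      have hfun : (fun i j => T2 i j κ - T i j (Sum.inl κ))
          = ∑ s, (-(lam κ s)) • ((eV s : I → J → F)) := by
        funext i j
        rw [Finset.sum_apply, Finset.sum_apply]
        have h9 : ∀ s : Fin d, ((-(lam κ s)) • ((eV s : I → J → F))) i j
            = -(lam κ s) * ∑ t, p s t * (a t i * b t j) := by
          intro s
          have h10 : (eV s : I → J → F) = Lmap (p s) := (hp s).symm
          rw [h10]
          rfl
        simp only [h9]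
        rw [hdec i j (Sum.inl κ)]
        simp only [hT2, hc2]
        rw [← Finset.sum_sub_distrib]
        rw [show (∑ s, -(lam κ s) * ∑ t, p s t * (a t i * b t j))
            = ∑ s, ∑ t, -(lam κ s) * (p s t * (a t i * b t j)) from
          Finset.sum_congr rfl fun s _ => Finset.mul_sum _ _ _]
        rw [Finset.sum_comm]
        refine Finset.sum_congr rfl fun t _ => ?_
        rw [mul_sub, sub_sub_cancel_left, Finset.mul_sum, ← Finset.sum_neg_distrib]
        exact Finset.sum_congr rfl fun s _ => by ring
      rw [hfun]
      exact sum_mem fun s _ => smul_mem _ _ (coe_mem _)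
    -- rank bound
    have hvanish : ∀ κ, ∀ t ∈ G, c2 κ t = 0 := by
      intro κ t ht
      have h12 := hlam κ t ht
      simp only [hc2]
      rw [h12, sub_self]
    have hGc : Gᶜ.card = trank F T - d := by
      rw [Finset.card_compl, hGcard, Fintype.card_fin]
    have hcardc : Fintype.card ↥(Gᶜ : Finset (Fin (trank F T))) = trank F T - d := by
      rw [Fintype.card_coe, hGc]
    set e2 := (Fintype.equivFinOfCardEq hcardc).symm with he2
    have hdecT2 : ∀ i j κ, T2 i j κ = ∑ m : Fin (trank F T - d),
        a (e2 m : Fin (trank F T)) i * b (e2 m : Fin (trank F T)) j * c2 κ (e2 m : Fin (trank F T)) := by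
      intro i j κ
      have hsplit := Finset.sum_add_sum_compl G (fun t => a t i * b t j * c2 κ t)
      have hzero : ∑ t ∈ G, a t i * b t j * c2 κ t = 0 :=
        Finset.sum_eq_zero fun t ht => by rw [hvanish κ t ht, mul_zero]
      have h11 : T2 i j κ = ∑ t ∈ Gᶜ, a t i * b t j * c2 κ t := by
        simp only [hT2]
        rw [← hsplit, hzero, zero_add]
      rw [h11]
      rw [← Finset.sum_coe_sort Gᶜ (fun t => a t i * b t j * c2 κ t)]
      rw [← Equiv.sum_comp e2 (fun x : ↥(Gᶜ : Finset (Fin (trank F T))) =>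
        a (x : Fin (trank F T)) i * b (x : Fin (trank F T)) j * c2 κ (x : Fin (trank F T)))]
    have htr2 : trank F T2 ≤ trank F T - d := trank_le _ _ _ hdecT2
    have hinf : sInf Mset ≤ trank F T - d := le_trans (Nat.sInf_le ⟨T2, hmem, rfl⟩) htr2
    omega
  omega
end

section
/- Let p_1,…,p_q be polynomials over a field F all of the same total degree d, and let p^in denote the sum of the monomials of p of maximal degree (the initial form). If (p_1^in,…,p_q^in) are algebraically independent over F, then (p_1,…,p_q) are algebraically independent over F. -/
open MvPolynomial

section Aux

variable {F σ : Type*} [CommRing F]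

lemma eq_C_of_totalDegree_eq_zero' {f : MvPolynomial σ F} (hf : f.totalDegree = 0) :
    f = C (coeff 0 f) := by
  classical
  ext d
  by_cases hd0 : d = 0
  · subst hd0; simp
  · rw [coeff_C, if_neg (Ne.symm hd0)]
    apply coeff_eq_zero_of_totalDegree_lt
    rw [hf]
    have hne : d.degree ≠ 0 := fun h => hd0 ((Finsupp.degree_eq_zero_iff d).mp h)
    have : d.degree = ∑ i ∈ d.support, d i := rfl
    omega

lemma hc_idem {f : MvPolynomial σ F} (m : ℕ) :
    MvPolynomial.homogeneousComponent m (MvPolynomial.homogeneousComponent m f)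
      = MvPolynomial.homogeneousComponent m f := by
  rw [homogeneousComponent_of_mem (homogeneousComponent_mem m f), if_pos rfl]

lemma totalDegree_sub_hc_lt {f : MvPolynomial σ F} {m : ℕ} (hf : f.totalDegree ≤ m)
    (hm : 0 < m) : (f - MvPolynomial.homogeneousComponent m f).totalDegree < m := by
  rw [totalDegree, Finset.sup_lt_iff (by simpa using hm)]
  intro d hd
  rw [mem_support_iff, coeff_sub, coeff_homogeneousComponent] at hd
  have hdeg : d.degree = d.sum fun _ e => e := rfl
  split at hd
  · simp at hd
  · rename_i hne
    have h1 : (d.sum fun _ e => e) ≤ m := (le_totalDegree (mem_support_iff.2 (by simpa using hd))).trans hf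
    rw [hdeg] at hne
    omega

lemma hc_mul {f g : MvPolynomial σ F} {m n : ℕ} (hf : f.totalDegree ≤ m)
    (hg : g.totalDegree ≤ n) :
    MvPolynomial.homogeneousComponent (m + n) (f * g)
      = MvPolynomial.homogeneousComponent m f * MvPolynomial.homogeneousComponent n g := by
  rcases Nat.eq_zero_or_pos m with hm | hm
  · subst hm
    have hf0 : f.totalDegree = 0 := le_antisymm hf (Nat.zero_le _)
    have hfC : f = C (coeff 0 f) := eq_C_of_totalDegree_eq_zero' hf0
    rw [hfC, zero_add, homogeneousComponent_C_mul]
    simp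
  · have hf1 : (homogeneousComponent m f).totalDegree ≤ m :=
      (homogeneousComponent_isHomogeneous m f).totalDegree_le
    have decomp : f * g = homogeneousComponent m f * g
        + (f - homogeneousComponent m f) * g := by ring
    have herr : homogeneousComponent (m + n) ((f - homogeneousComponent m f) * g) = 0 := by
      apply homogeneousComponent_eq_zero
      calc ((f - homogeneousComponent m f) * g).totalDegree
          ≤ (f - homogeneousComponent m f).totalDegree + g.totalDegree := totalDegree_mul _ _
        _ < m + n := by
            have := totalDegree_sub_hc_lt hf hm
            omega
    rw [decomp, map_add, herr, add_zero]
    -- now reduce to the case where the left factor is homogeneous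
    rcases Nat.eq_zero_or_pos n with hn | hn
    · subst hn
      have hg0 : g.totalDegree = 0 := le_antisymm hg (Nat.zero_le _)
      have hgC : g = C (coeff 0 g) := eq_C_of_totalDegree_eq_zero' hg0
      rw [hgC, add_zero, mul_comm, homogeneousComponent_C_mul]
      simp [mul_comm, hc_idem]
    · have hg1 : (homogeneousComponent n g).totalDegree ≤ n :=
        (homogeneousComponent_isHomogeneous n g).totalDegree_le
      have decomp2 : homogeneousComponent m f * g
          = homogeneousComponent m f * homogeneousComponent n g
          + homogeneousComponent m f * (g - homogeneousComponent n g) := by ring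
      have herr2 : homogeneousComponent (m + n)
          (homogeneousComponent m f * (g - homogeneousComponent n g)) = 0 := by
        apply homogeneousComponent_eq_zero
        calc (homogeneousComponent m f * (g - homogeneousComponent n g)).totalDegree
            ≤ (homogeneousComponent m f).totalDegree
              + (g - homogeneousComponent n g).totalDegree := totalDegree_mul _ _
          _ < m + n := by
              have := totalDegree_sub_hc_lt hg hn
              omega
      rw [decomp2, map_add, herr2, add_zero]
      have hmem : homogeneousComponent m f * homogeneousComponent n g
          ∈ homogeneousSubmodule σ F (m + n) := by
        rw [mem_homogeneousSubmodule]
        exact (homogeneousComponent_isHomogeneous m f).mul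
          (homogeneousComponent_isHomogeneous n g)
      rw [homogeneousComponent_of_mem hmem, if_pos rfl]

lemma hc_pow {f : MvPolynomial σ F} {m : ℕ} (hf : f.totalDegree ≤ m) (k : ℕ) :
    MvPolynomial.homogeneousComponent (m * k) (f ^ k)
      = MvPolynomial.homogeneousComponent m f ^ k := by
  induction k with
  | zero => simp
  | succ k ih =>
    have h1 : (f ^ k).totalDegree ≤ m * k :=
      (totalDegree_pow f k).trans (by calc k * f.totalDegree ≤ k * m := Nat.mul_le_mul_left _ hf
        _ = m * k := Nat.mul_comm _ _)
    rw [pow_succ, show m * (k + 1) = m * k + m by ring, hc_mul h1 hf, ih, pow_succ]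

lemma hc_prod {ι : Type*} (s : Finset ι) (f : ι → MvPolynomial σ F) (n : ι → ℕ)
    (h : ∀ i ∈ s, (f i).totalDegree ≤ n i) :
    MvPolynomial.homogeneousComponent (∑ i ∈ s, n i) (∏ i ∈ s, f i)
      = ∏ i ∈ s, MvPolynomial.homogeneousComponent (n i) (f i) := by
  classical
  induction s using Finset.cons_induction with
  | empty => simp
  | cons a s ha ih =>
    have hprod : (∏ i ∈ s, f i).totalDegree ≤ ∑ i ∈ s, n i :=
      (totalDegree_finset_prod s f).trans
        (Finset.sum_le_sum fun i hi => h i (Finset.mem_cons_of_mem hi))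
    rw [Finset.prod_cons, Finset.sum_cons, hc_mul (h a (Finset.mem_cons_self _ _)) hprod,
      ih (fun i hi => h i (Finset.mem_cons_of_mem hi)), Finset.prod_cons]

lemma hc_aeval {q : ℕ} {p : Fin q → MvPolynomial σ F} {d : ℕ} (hd : 0 < d)
    (hdeg : ∀ i, (p i).totalDegree ≤ d) {e : ℕ} (Q : MvPolynomial (Fin q) F)
    (hQ : Q.totalDegree ≤ e) :
    MvPolynomial.homogeneousComponent (d * e) (MvPolynomial.aeval p Q)
      = MvPolynomial.aeval (fun i => MvPolynomial.homogeneousComponent d (p i))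
          (MvPolynomial.homogeneousComponent e Q) := by
  classical
  conv_lhs => rw [Q.as_sum]
  conv_rhs => rw [Q.as_sum]
  rw [map_sum, map_sum, map_sum, map_sum]
  refine Finset.sum_congr rfl fun v hv => ?_
  have hvdeg : v.degree = v.sum fun _ e => e := rfl
  have hvle : v.degree ≤ e := by rw [hvdeg]; exact (le_totalDegree hv).trans hQ
  have hmon : (monomial v (coeff v Q)) ∈ homogeneousSubmodule (Fin q) F v.degree :=
    isHomogeneous_monomial _ rfl
  rw [homogeneousComponent_of_mem hmon]
  by_cases hve : e = v.degree
  · rw [if_pos hve]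
    rw [aeval_monomial, aeval_monomial, algebraMap_eq, homogeneousComponent_C_mul]
    congr 1
    have hsum : d * e = ∑ i ∈ v.support, d * v i := by
      rw [← Finset.mul_sum, hve]; rfl
    rw [Finsupp.prod, Finsupp.prod, hsum,
      hc_prod v.support (fun i => p i ^ v i) (fun i => d * v i)
        (fun i _ => (totalDegree_pow _ _).trans
          (by calc v i * (p i).totalDegree ≤ v i * d := Nat.mul_le_mul_left _ (hdeg i)
            _ = d * v i := Nat.mul_comm _ _))]
    exact Finset.prod_congr rfl fun i _ => hc_pow (hdeg i) (v i)
  · rw [if_neg hve, map_zero]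
    apply homogeneousComponent_eq_zero
    have hvlt : v.degree < e := lt_of_le_of_ne hvle (fun h => hve h.symm)
    calc (MvPolynomial.aeval p (monomial v (coeff v Q))).totalDegree
        ≤ (C (coeff v Q) : MvPolynomial σ F).totalDegree
          + (∏ i ∈ v.support, p i ^ v i).totalDegree := by
          rw [aeval_monomial, algebraMap_eq]; exact totalDegree_mul _ _
      _ ≤ 0 + ∑ i ∈ v.support, v i * d := by
          refine Nat.add_le_add (le_of_eq (totalDegree_C _)) ?_
          exact (totalDegree_finset_prod _ _).trans (Finset.sum_le_sum fun i _ =>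
            (totalDegree_pow _ _).trans (Nat.mul_le_mul_left _ (hdeg i)))
      _ = v.degree * d := by rw [Nat.zero_add, ← Finset.sum_mul]; rfl
      _ < d * e := by
          rw [Nat.mul_comm]
          exact (Nat.mul_lt_mul_left hd).mpr hvlt

end Aux

/-- If `p_1,…,p_q` are polynomials over `F` of the same total degree `d` and their initial
forms (top-degree homogeneous components) are algebraically independent over `F`, then
`p_1,…,p_q` are algebraically independent over `F`. -/
theorem algebraicIndependent_of_initialForms {F σ : Type*} [Field F] {q d : ℕ}
    (p : Fin q → MvPolynomial σ F) (hdeg : ∀ i, (p i).totalDegree = d)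
    (hin : AlgebraicIndependent F fun i => MvPolynomial.homogeneousComponent d (p i)) :
    AlgebraicIndependent F p := by
  rcases Nat.eq_zero_or_pos d with hd | hd
  · subst hd
    have hp : (fun i => MvPolynomial.homogeneousComponent 0 (p i)) = p := by
      funext i
      have hmem : p i ∈ homogeneousSubmodule σ F 0 :=
        mem_homogeneousSubmodule _ _ |>.2 (isHomogeneous_of_totalDegree_zero σ (hdeg i))
      rw [homogeneousComponent_of_mem hmem, if_pos rfl]
    rwa [hp] at hin
  · rw [algebraicIndependent_iff] at hin ⊢
    intro Q hQ
    by_contra hQne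
    set e := Q.totalDegree with he
    have hQe : MvPolynomial.homogeneousComponent e Q ≠ 0 := by
      obtain ⟨v, hv, hve⟩ := Finset.exists_mem_eq_sup Q.support
        (support_nonempty.2 hQne) (fun s => s.sum fun _ e => e)
      intro h0
      have hdv : v.degree = e := by rw [he, totalDegree, hve]; rfl
      have : coeff v (MvPolynomial.homogeneousComponent e Q) = coeff v Q := by
        rw [coeff_homogeneousComponent, if_pos hdv]
      rw [h0, coeff_zero] at this
      exact (mem_support_iff.mp hv) this.symm
    have hkey := hc_aeval hd (fun i => (hdeg i).le) Q (le_refl e)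
    rw [hQ, map_zero] at hkey
    exact hQe (hin _ hkey.symm)
end

section
/- If a tensor Φ over a field K' is the sum of a tensor G whose entries generate a field of transcendence degree at least t over K, and a tensor of rank at most s over K', where K ⊆ K', then the entries of Φ generate a field of transcendence degree at least t − 3ns over K, for n×n×n tensors. -/
open IntermediateField Polynomial

section Helpers
variable {K E : Type*} [Field K] [Field E] [Algebra K E]


theorem isAlg_push {A B : Type*} [CommRing A] [CommRing B] [Algebra A E] [Algebra B E]
    (e : A →+* B) (he : Function.Injective e)
    (hcomp : ∀ x, algebraMap B E (e x) = algebraMap A E x) {z : E}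
    (h : IsAlgebraic A z) : IsAlgebraic B z := by
  obtain ⟨p, hp0, hpz⟩ := h
  refine ⟨p.map e, (Polynomial.map_ne_zero_iff he).mpr hp0, ?_⟩
  rw [aeval_def, eval₂_map, ← hpz, aeval_def]
  congr 1
  exact RingHom.ext hcomp

theorem isAlg_mono {L₁ L₂ : IntermediateField K E} (h : L₁ ≤ L₂) {z : E}
    (hz : IsAlgebraic ↥L₁ z) : IsAlgebraic ↥L₂ z :=
  isAlg_push (IntermediateField.inclusion h).toRingHom
    (fun a b hab => Subtype.ext (by simpa using congrArg Subtype.val hab))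
    (fun x => by simp) hz

theorem isAlg_ring_to_field {S : Set E} {z : E}
    (hz : IsAlgebraic ↥(Algebra.adjoin K S) z) : IsAlgebraic ↥(IntermediateField.adjoin K S) z :=
  isAlg_push (Subalgebra.inclusion (IntermediateField.algebra_adjoin_le_adjoin K S)).toRingHom
    (Subalgebra.inclusion_injective _) (fun x => by rw [Subalgebra.algebraMap_eq, Subalgebra.algebraMap_eq]; simp; rfl) hz


theorem isAlg_field_to_ring {S : Set E} {z : E}
    (hz : IsAlgebraic ↥(IntermediateField.adjoin K S) z) :
    IsAlgebraic ↥(Algebra.adjoin K S) z := by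
  classical
  obtain ⟨p, hp0, hpz⟩ := hz
  have hrange : Algebra.adjoin K S = (MvPolynomial.aeval (Subtype.val : S → E)).range := by
    have h1 := Algebra.adjoin_range_eq_range_aeval K (Subtype.val : S → E)
    rwa [Subtype.range_coe] at h1
  have hmem : ∀ j : ℕ, ∃ u v : ↥(Algebra.adjoin K S), ((p.coeff j : E)) = (u : E) / (v : E) := by
    intro j
    obtain ⟨r, s, hrs⟩ := (IntermediateField.mem_adjoin_iff K ((p.coeff j : E))).mp (p.coeff j).2
    exact ⟨⟨_, hrange ▸ ⟨r, rfl⟩⟩, ⟨_, hrange ▸ ⟨s, rfl⟩⟩, hrs⟩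
  choose uu vv huv using hmem
  have hv0 : ∀ j ∈ p.support, (vv j : E) ≠ 0 := by
    intro j hj h0
    have hc : (p.coeff j : E) ≠ 0 := by
      simpa using Polynomial.mem_support_iff.mp hj
    rw [huv j, h0, div_zero] at hc
    exact hc rfl
  have hu : ∀ j ∈ p.support, (p.coeff j : E) * (vv j : E) = (uu j : E) := by
    intro j hj
    rw [huv j, div_mul_cancel₀]
    exact hv0 j hj
  set P : Polynomial ↥(Algebra.adjoin K S) :=
    ∑ j ∈ p.support, Polynomial.monomial j (uu j * ∏ j' ∈ p.support.erase j, vv j') with hP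
  refine ⟨P, ?_, ?_⟩
  · obtain ⟨j₀, hj₀⟩ := Polynomial.support_nonempty.mpr hp0
    intro h0
    have hcoeff : P.coeff j₀ = uu j₀ * ∏ j' ∈ p.support.erase j₀, vv j' := by
      rw [hP, Polynomial.finset_sum_coeff]
      rw [Finset.sum_eq_single j₀]
      · simp
      · intro b _ hb; simp [Polynomial.coeff_monomial, hb]
      · intro hj; exact absurd hj₀ hj
    rw [h0] at hcoeff
    have : (uu j₀ : E) * ∏ j' ∈ p.support.erase j₀, (vv j' : E) = 0 := by
      simpa [SubmonoidClass.coe_finset_prod] using congrArg (Subtype.val) hcoeff.symm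
    rcases mul_eq_zero.mp this with h | h
    · have : (p.coeff j₀ : E) * (vv j₀ : E) = 0 := by rw [hu j₀ hj₀, h]
      rcases mul_eq_zero.mp this with h' | h'
      · exact Polynomial.mem_support_iff.mp hj₀ (by exact_mod_cast h')
      · exact hv0 j₀ hj₀ h'
    · obtain ⟨j', hj', h'⟩ := Finset.prod_eq_zero_iff.mp h
      exact hv0 j' (Finset.mem_of_mem_erase hj') h'
  · have hp_eval : (Polynomial.aeval z) p = ∑ j ∈ p.support, (p.coeff j : E) * z ^ j := by
      rw [Polynomial.aeval_def, Polynomial.eval₂_eq_sum, Polynomial.sum_def]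
      rfl
    have h1 : (Polynomial.aeval z) P
        = ∑ j ∈ p.support, ((uu j : E) * ∏ j' ∈ p.support.erase j, (vv j' : E)) * z ^ j := by
      rw [hP, map_sum]
      refine Finset.sum_congr rfl fun j hj => ?_
      rw [Polynomial.aeval_monomial]
      congr 1
      rw [map_mul, map_prod]
      simp [Subalgebra.algebraMap_eq]
    have h2 : ∀ j ∈ p.support, ((uu j : E) * ∏ j' ∈ p.support.erase j, (vv j' : E)) * z ^ j
        = (∏ j' ∈ p.support, (vv j' : E)) * ((p.coeff j : E) * z ^ j) := by
      intro j hj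
      rw [← hu j hj, ← Finset.mul_prod_erase _ _ hj]; ring
    rw [h1, Finset.sum_congr rfl h2, ← Finset.mul_sum, ← hp_eval, hpz, mul_zero]


set_option synthInstance.maxHeartbeats 800000 in
set_option maxHeartbeats 1600000 in
theorem exch0 {k : Type*} [Field k] [Algebra k E] {a d : E}
    (ha : Transcendental k a) (h : IsAlgebraic ↥(IntermediateField.adjoin k {d}) a) :
    IsAlgebraic ↥(IntermediateField.adjoin k {a}) d := by
  classical
  obtain ⟨p, hp0, hpz⟩ := h
  have hmem : ∀ j : ℕ, ∃ f g : k[X],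
      ((p.coeff j : E)) = (Polynomial.aeval d f) / (Polynomial.aeval d g) :=
    fun j => (IntermediateField.mem_adjoin_simple_iff k _).mp (p.coeff j).2
  choose f g hfg using hmem
  have hg0 : ∀ j ∈ p.support, Polynomial.aeval d (g j) ≠ 0 := by
    intro j hj h0
    have hc : (p.coeff j : E) ≠ 0 := by
      simpa using Polynomial.mem_support_iff.mp hj
    rw [hfg j, h0, div_zero] at hc
    exact hc rfl
  have hfval : ∀ j ∈ p.support, (p.coeff j : E) * Polynomial.aeval d (g j)
      = Polynomial.aeval d (f j) := by
    intro j hj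
    rw [hfg j, div_mul_cancel₀]
    exact hg0 j hj
  set F : ℕ → k[X] := fun j => f j * ∏ j' ∈ p.support.erase j, g j' with hF
  have hFval : ∀ j ∈ p.support, Polynomial.aeval d (F j)
      = (p.coeff j : E) * ∏ j' ∈ p.support, Polynomial.aeval d (g j') := by
    intro j hj
    rw [hF]
    simp only [map_mul, map_prod]
    rw [← hfval j hj, ← Finset.mul_prod_erase _ _ hj]
    ring
  have hp_eval : (Polynomial.aeval a) p = ∑ j ∈ p.support, (p.coeff j : E) * a ^ j := by
    rw [Polynomial.aeval_def, Polynomial.eval₂_eq_sum, Polynomial.sum_def]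
    rfl
  have key : ∑ j ∈ p.support, Polynomial.aeval d (F j) * a ^ j = 0 := by
    have h2 : ∀ j ∈ p.support, Polynomial.aeval d (F j) * a ^ j
        = (∏ j' ∈ p.support, Polynomial.aeval d (g j')) * ((p.coeff j : E) * a ^ j) := by
      intro j hj
      rw [hFval j hj]; ring
    rw [Finset.sum_congr rfl h2, ← Finset.mul_sum, ← hp_eval, hpz, mul_zero]
  set L := IntermediateField.adjoin k {a} with hL
  set aa : ↥L := ⟨a, IntermediateField.mem_adjoin_simple_self k a⟩ with haa
  set q : Polynomial ↥L := ∑ j ∈ p.support, Polynomial.C (aa ^ j) * (F j).map (algebraMap k ↥L)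
    with hq
  have hqcoeff : ∀ i, q.coeff i = ∑ j ∈ p.support, aa ^ j * algebraMap k ↥L ((F j).coeff i) := by
    intro i
    rw [hq, Polynomial.finset_sum_coeff]
    exact Finset.sum_congr rfl fun j _ => by rw [Polynomial.coeff_C_mul, Polynomial.coeff_map]
  have hqeval : Polynomial.aeval d q = 0 := by
    rw [hq, map_sum, ← key]
    refine Finset.sum_congr rfl fun j hj => ?_
    rw [map_mul, Polynomial.aeval_C, Polynomial.aeval_map_algebraMap, map_pow]
    have : (algebraMap ↥L E) aa = a := rfl
    rw [this, mul_comm]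
  refine ⟨q, ?_, hqeval⟩
  intro h0
  obtain ⟨j₀, hj₀⟩ := Polynomial.support_nonempty.mpr hp0
  have hFj : F j₀ = 0 := by
    ext i
    have hcoeffE : ∑ j ∈ p.support, a ^ j * algebraMap k E ((F j).coeff i) = 0 := by
      have h1 : q.coeff i = 0 := by rw [h0]; simp
      rw [hqcoeff i] at h1
      have h2 := congrArg (algebraMap ↥L E) h1
      rw [map_sum (algebraMap ↥L E), map_zero] at h2
      rw [← h2]
      refine Finset.sum_congr rfl fun j _ => ?_
      rw [map_mul, map_pow]
      have h3 : (algebraMap ↥L E) aa = a := rfl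
      rw [h3, ← IsScalarTower.algebraMap_apply]
    set R : k[X] := ∑ j ∈ p.support, Polynomial.C ((F j).coeff i) * Polynomial.X ^ j with hR
    have hRa : Polynomial.aeval a R = 0 := by
      rw [hR, map_sum, ← hcoeffE]
      refine Finset.sum_congr rfl fun j _ => ?_
      rw [map_mul, Polynomial.aeval_C, map_pow, Polynomial.aeval_X, mul_comm]
    have hR0 : R = 0 := by
      by_contra hR0
      exact ha ⟨R, hR0, hRa⟩
    have : (F j₀).coeff i = R.coeff j₀ := by
      rw [hR, Polynomial.finset_sum_coeff, Finset.sum_eq_single j₀]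
      · rw [Polynomial.C_mul_X_pow_eq_monomial, Polynomial.coeff_monomial, if_pos rfl]
      · intro b _ hb
        rw [Polynomial.C_mul_X_pow_eq_monomial, Polynomial.coeff_monomial, if_neg hb]
      · intro hj; exact absurd hj₀ hj
    rw [this, hR0]
    simp
  have hne : Polynomial.aeval d (F j₀) ≠ 0 := by
    rw [hFval j₀ hj₀]
    refine mul_ne_zero ?_ (Finset.prod_ne_zero_iff.mpr hg0)
    simpa using Polynomial.mem_support_iff.mp hj₀
  rw [hFj] at hne
  simp at hne

theorem dep_trans {S T : Set E} (hST : ∀ x ∈ S, IsAlgebraic ↥(IntermediateField.adjoin K T) x)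
    {z : E} (hz : IsAlgebraic ↥(IntermediateField.adjoin K S) z) :
    IsAlgebraic ↥(IntermediateField.adjoin K T) z := by
  set L := IntermediateField.adjoin K T with hLdef
  haveI halg : Algebra.IsAlgebraic ↥L ↥(IntermediateField.adjoin ↥L S) :=
    IntermediateField.isAlgebraic_adjoin (fun x hx => (isAlgebraic_iff_isIntegral).mp (hST x hx))
  have hz2 : IsAlgebraic ↥(IntermediateField.adjoin ↥L S) z := by
    have hle : IntermediateField.adjoin K S ≤ (IntermediateField.adjoin ↥L S).restrictScalars K := by
      rw [IntermediateField.restrictScalars_adjoin]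
      exact IntermediateField.adjoin.mono K _ _ Set.subset_union_right
    exact isAlg_mono hle hz
  haveI : Algebra.IsIntegral ↥L ↥(IntermediateField.adjoin ↥L S) :=
    Algebra.isAlgebraic_iff_isIntegral.mp halg
  exact isAlgebraic_iff_isIntegral.mpr
    (isIntegral_trans z (isAlgebraic_iff_isIntegral.mp hz2))

set_option maxHeartbeats 1000000 in
theorem exch1 {M : IntermediateField K E} {a d : E}
    (ha : Transcendental ↥M a)
    (h : IsAlgebraic ↥(IntermediateField.adjoin K (insert d ↑M)) a) :
    IsAlgebraic ↥(IntermediateField.adjoin K (insert a (M : Set E))) d := by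
  have e1 : IntermediateField.adjoin K (insert d (M : Set E))
      = (IntermediateField.adjoin ↥M {d}).restrictScalars K := by
    rw [IntermediateField.restrictScalars_adjoin, Set.union_singleton]
  have e2 : IntermediateField.adjoin K (insert a (M : Set E))
      = (IntermediateField.adjoin ↥M {a}).restrictScalars K := by
    rw [IntermediateField.restrictScalars_adjoin, Set.union_singleton]
  rw [e1] at h
  have h2 : IsAlgebraic ↥(IntermediateField.adjoin ↥M {a}) d := exch0 ha h
  rw [e2]
  exact h2

set_option maxHeartbeats 1000000 in
set_option synthInstance.maxHeartbeats 400000 in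
theorem exch (D : Finset E) {S : Set E} {a : E}
    (ha : Transcendental ↥(IntermediateField.adjoin K S) a)
    (h : IsAlgebraic ↥(IntermediateField.adjoin K (S ∪ ↑D)) a) :
    ∃ b ∈ D, IsAlgebraic ↥(IntermediateField.adjoin K ((S ∪ ((D : Set E) \ {b})) ∪ {a})) b := by
  classical
  induction D using Finset.induction_on with
  | empty =>
    refine absurd ?_ ha
    have : S ∪ ((∅ : Finset E) : Set E) = S := by simp
    rwa [this] at h
  | @insert d D hd ih =>
    by_cases hcase : IsAlgebraic ↥(IntermediateField.adjoin K (S ∪ ↑D)) a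
    · obtain ⟨b, hbD, hb⟩ := ih hcase
      refine ⟨b, Finset.mem_insert_of_mem hbD, isAlg_mono ?_ hb⟩
      apply IntermediateField.adjoin.mono
      refine Set.union_subset_union_left _ (Set.union_subset_union_right _ ?_)
      refine Set.diff_subset_diff_left ?_
      rw [Finset.coe_insert]
      exact Set.subset_insert d ↑D
    · set M := IntermediateField.adjoin K (S ∪ ↑D) with hM
      have h' : IsAlgebraic ↥(IntermediateField.adjoin K (insert d (M : Set E))) a := by
        have e3 : IntermediateField.adjoin K (insert d (M : Set E))
            = IntermediateField.adjoin K (insert d (S ∪ ↑D)) :=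
          IntermediateField.adjoin_insert_adjoin K _ d
        rw [e3]
        have hset : S ∪ (↑(insert d D) : Set E) = insert d (S ∪ ↑D) := by
          rw [Finset.coe_insert, Set.union_insert]
        rwa [hset] at h
      have hb := exch1 (M := M) hcase h'
      have e4 : IntermediateField.adjoin K (insert a (M : Set E))
          = IntermediateField.adjoin K ((S ∪ ((↑(insert d D) : Set E) \ {d})) ∪ {a}) := by
        rw [hM, IntermediateField.adjoin_insert_adjoin]
        congr 1
        have : ((↑(insert d D) : Set E) \ {d}) = ↑D := by
          rw [Finset.coe_insert, Set.insert_diff_of_mem _ (Set.mem_singleton d),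
            Set.diff_singleton_eq_self (by exact_mod_cast hd)]
        rw [this, Set.union_singleton]
      rw [e4] at hb
      exact ⟨d, Finset.mem_insert_self d D, hb⟩

theorem isAlg_of_mem {L : IntermediateField K E} {z : E} (h : z ∈ L) : IsAlgebraic ↥L z :=
  isAlgebraic_algebraMap (⟨z, h⟩ : ↥L)

theorem tr_lemma {m : ℕ} {y : Fin (m + 1) → E} (hy : AlgebraicIndependent K y) {k : ℕ}
    (hk : k < m + 1) :
    Transcendental ↥(Algebra.adjoin K (y '' {i : Fin (m + 1) | (i : ℕ) < k})) (y ⟨k, hk⟩) := by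
  set emb : Fin k → Fin (m + 1) := fun j => ⟨j.1, by omega⟩ with hemb
  have hembinj : Function.Injective emb := by
    intro i j h
    have := congrArg Fin.val h
    simp only [hemb] at this
    exact Fin.ext this
  have hxind := hy.comp emb hembinj
  have hopt : AlgebraicIndependent K (fun o : Option (Fin k) => o.elim (y ⟨k, hk⟩) (y ∘ emb)) := by
    have hfinj : Function.Injective
        (fun o : Option (Fin k) => (Option.elim o ⟨k, hk⟩ emb : Fin (m + 1))) := by
      intro o1 o2 h
      cases o1 with
      | none => cases o2 with
        | none => rfl
        | some j =>
          exfalso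
          have := congrArg Fin.val h
          simp only [hemb, Option.elim] at this
          omega
      | some i => cases o2 with
        | none =>
          exfalso
          have := congrArg Fin.val h
          simp only [hemb, Option.elim] at this
          omega
        | some j =>
          have := congrArg Fin.val h
          simp only [hemb, Option.elim] at this
          exact congrArg _ (Fin.ext this)
    have h2 := hy.comp _ hfinj
    have h3 : (fun o : Option (Fin k) => o.elim (y ⟨k, hk⟩) (y ∘ emb))
        = y ∘ (fun o : Option (Fin k) => (Option.elim o ⟨k, hk⟩ emb : Fin (m + 1))) := by
      funext o; cases o <;> rfl
    rw [h3]; exact h2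
  have hres := (hxind.option_iff_transcendental (y ⟨k, hk⟩)).mp hopt
  have hrange : Set.range (y ∘ emb) = y '' {i : Fin (m + 1) | (i : ℕ) < k} := by
    rw [Set.range_comp]
    have hre : Set.range emb = {i : Fin (m + 1) | (i : ℕ) < k} := by
      ext i
      constructor
      · rintro ⟨j, rfl⟩; simpa [hemb] using j.2
      · intro hi; exact ⟨⟨i.1, hi⟩, Fin.ext rfl⟩
    rw [hre]
  rwa [hrange] at hres

set_option maxHeartbeats 1000000 in
theorem steinitz (m : ℕ) (B : Finset E) (hB : B.card ≤ m) (y : Fin (m + 1) → E)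
    (halg : ∀ i, IsAlgebraic ↥(IntermediateField.adjoin K (B : Set E)) (y i))
    (hy : AlgebraicIndependent K y) : False := by
  classical
  have htr : ∀ (k : ℕ) (hk : k < m + 1),
      Transcendental ↥(IntermediateField.adjoin K (y '' {i | (i : ℕ) < k})) (y ⟨k, hk⟩) :=
    fun k hk halgk => tr_lemma hy hk (isAlg_field_to_ring halgk)
  have claim : ∀ k : ℕ, k ≤ m → ∃ D : Finset E, (↑D : Set E) ⊆ ↑B ∧ D.card + k ≤ m ∧
      ∀ i, IsAlgebraic
        ↥(IntermediateField.adjoin K ((D : Set E) ∪ y '' {i' | (i' : ℕ) < k})) (y i) := by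
    intro k
    induction k with
    | zero =>
      intro _
      refine ⟨B, subset_rfl, by omega, fun i => ?_⟩
      have hs : (B : Set E) ∪ y '' {i' : Fin (m + 1) | (i' : ℕ) < 0} = ↑B := by
        have : {i' : Fin (m + 1) | (i' : ℕ) < 0} = ∅ := by ext; simp
        rw [this]; simp
      rw [hs]; exact halg i
    | succ k ih =>
      intro hk1
      obtain ⟨D, hDB, hDcard, hDalg⟩ := ih (by omega)
      have hkm : k < m + 1 := by omega
      set yk := y ⟨k, hkm⟩ with hyk
      set Yk : Set E := y '' {i' | (i' : ℕ) < k} with hYk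
      have htrk : Transcendental ↥(IntermediateField.adjoin K Yk) yk := htr k hkm
      have halgk : IsAlgebraic ↥(IntermediateField.adjoin K (Yk ∪ ↑D)) yk := by
        have h := hDalg ⟨k, hkm⟩
        rwa [Set.union_comm] at h
      obtain ⟨b, hbD, hb⟩ := exch D htrk halgk
      have hYsucc : y '' {i' : Fin (m + 1) | (i' : ℕ) < k + 1} = insert yk Yk := by
        have hsets : {i' : Fin (m + 1) | (i' : ℕ) < k + 1}
            = insert ⟨k, hkm⟩ {i' : Fin (m + 1) | (i' : ℕ) < k} := by
          ext i'
          constructor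
          · intro h
            have h' : (i' : ℕ) < k + 1 := h
            rcases Nat.lt_succ_iff_lt_or_eq.mp h' with h2 | h2
            · exact Set.mem_insert_of_mem _ h2
            · have he : i' = ⟨k, hkm⟩ := Fin.ext h2
              rw [he]; exact Set.mem_insert _ _
          · intro h
            rcases Set.mem_insert_iff.mp h with h2 | h2
            · rw [h2]; show (k : ℕ) < k + 1; omega
            · have h3 : (i' : ℕ) < k := h2
              show (i' : ℕ) < k + 1
              omega
        rw [hYk, hyk, hsets, Set.image_insert_eq]
      refine ⟨D.erase b, ?_, ?_, ?_⟩
      · exact subset_trans (Finset.coe_subset.mpr (Finset.erase_subset b D)) hDB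
      · have h := Finset.card_erase_add_one hbD
        omega
      · have hmem : ∀ x ∈ (↑D : Set E) ∪ Yk,
            IsAlgebraic ↥(IntermediateField.adjoin K
              ((↑(D.erase b) : Set E) ∪ y '' {i' | (i' : ℕ) < k + 1})) x := by
          intro x hx
          rcases hx with hx | hx
          · by_cases hxb : x = b
            · subst hxb
              refine isAlg_mono (IntermediateField.adjoin.mono _ _ _ ?_) hb
              rw [hYsucc, Finset.coe_erase]
              intro w hw
              rcases hw with (hw | hw) | hw
              · exact Or.inr (Set.mem_insert_of_mem _ hw)
              · exact Or.inl hw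
              · rw [hw]; exact Or.inr (Set.mem_insert _ _)
            · refine isAlg_of_mem (IntermediateField.subset_adjoin _ _ (Or.inl ?_))
              exact Finset.mem_coe.mpr (Finset.mem_erase.mpr ⟨hxb, Finset.mem_coe.mp hx⟩)
          · refine isAlg_of_mem (IntermediateField.subset_adjoin _ _ (Or.inr ?_))
            rw [hYsucc]
            exact Set.mem_insert_of_mem _ hx
        exact fun i => dep_trans hmem (hDalg i)
  obtain ⟨D, hDB, hDcard, hDalg⟩ := claim m le_rfl
  have hD0 : D = ∅ := Finset.card_eq_zero.mp (by omega)
  have hlast := hDalg ⟨m, by omega⟩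
  rw [hD0] at hlast
  have hset : ((∅ : Finset E) : Set E) ∪ y '' {i' : Fin (m + 1) | (i' : ℕ) < m}
      = y '' {i' | (i' : ℕ) < m} := by simp
  rw [hset] at hlast
  exact htr m (by omega) hlast


end Helpers


set_option maxHeartbeats 1000000 in
/-- If an `n×n×n` tensor `Φ` is the sum of a tensor `G` whose entries have at least `t`
degrees of freedom over `K` and a tensor `R` of rank at most `s` over a field `K' ⊇ K`,
then the entries of `Φ` have at least `t − 3ns` degrees of freedom over `K`. -/
theorem freedom_of_sum_with_low_rank {K E : Type*} [Field K] [Field E] [Algebra K E]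
    {n s t : ℕ} (G R Φ : Fin n → Fin n → Fin n → E)
    (K' : Subfield E) (hK : Set.range (algebraMap K E) ⊆ K')
    (hsum : ∀ i j k, Φ i j k = G i j k + R i j k)
    (hG : ∃ u : Finset (Fin n × Fin n × Fin n), u.card = t ∧
      AlgebraicIndependent K (fun p : {x // x ∈ u} => G p.1.1 p.1.2.1 p.1.2.2))
    (hR : ∃ a b c : Fin s → Fin n → K',
      ∀ i j k, R i j k = ∑ α, (a α i : E) * (b α j : E) * (c α k : E)) :
    ∃ u : Finset (Fin n × Fin n × Fin n), u.card = t - 3 * n * s ∧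
      AlgebraicIndependent K (fun p : {x // x ∈ u} => Φ p.1.1 p.1.2.1 p.1.2.2) := by
  classical
  obtain ⟨u, hucard, hGind⟩ := hG
  obtain ⟨a, b, c, hRabc⟩ := hR
  set Φval : Fin n × Fin n × Fin n → E := fun p => Φ p.1 p.2.1 p.2.2 with hΦval
  set Gval : Fin n × Fin n × Fin n → E := fun p => G p.1 p.2.1 p.2.2 with hGval
  set P : Set E := Φval '' ↑u with hP
  set Fa : Finset E := Finset.image (fun q : Fin s × Fin n => ((a q.1 q.2 : E))) Finset.univ
    with hFa
  set Fb : Finset E := Finset.image (fun q : Fin s × Fin n => ((b q.1 q.2 : E))) Finset.univ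
    with hFb
  set Fc : Finset E := Finset.image (fun q : Fin s × Fin n => ((c q.1 q.2 : E))) Finset.univ
    with hFc
  set Ff : Finset E := Fa ∪ Fb ∪ Fc with hFf
  have hFcard : Ff.card ≤ 3 * n * s := by
    have h1 : Ff.card ≤ Fa.card + Fb.card + Fc.card :=
      le_trans (Finset.card_union_le _ _) (by
        have := Finset.card_union_le Fa Fb
        omega)
    have ha' : Fa.card ≤ s * n := le_trans (Finset.card_image_le) (by simp)
    have hb' : Fb.card ≤ s * n := le_trans (Finset.card_image_le) (by simp)
    have hc' : Fc.card ≤ s * n := le_trans (Finset.card_image_le) (by simp)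
    have h2 : s * n + (s * n) + (s * n) = 3 * n * s := by ring
    calc Ff.card ≤ Fa.card + Fb.card + Fc.card := h1
      _ ≤ s * n + (s * n) + (s * n) := by omega
      _ = 3 * n * s := h2
  set W : IntermediateField K E := IntermediateField.adjoin K (P ∪ ↑Ff) with hW
  have hGmem : ∀ p : Fin n × Fin n × Fin n, p ∈ u → Gval p ∈ W := by
    intro p hp
    have hΦm : Φval p ∈ W := IntermediateField.subset_adjoin _ _ (Or.inl ⟨p, hp, rfl⟩)
    have hRmem : (∑ α, (a α p.1 : E) * (b α p.2.1 : E) * (c α p.2.2 : E)) ∈ W := by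
      refine sum_mem fun α _ => mul_mem (mul_mem ?_ ?_) ?_
      · exact IntermediateField.subset_adjoin _ _ (Or.inr (by
          exact_mod_cast Finset.mem_union_left _ (Finset.mem_union_left _
            (Finset.mem_image.mpr ⟨(α, p.1), Finset.mem_univ _, rfl⟩))))
      · exact IntermediateField.subset_adjoin _ _ (Or.inr (by
          exact_mod_cast Finset.mem_union_left _ (Finset.mem_union_right _
            (Finset.mem_image.mpr ⟨(α, p.2.1), Finset.mem_univ _, rfl⟩))))
      · exact IntermediateField.subset_adjoin _ _ (Or.inr (by
          exact_mod_cast Finset.mem_union_right _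
            (Finset.mem_image.mpr ⟨(α, p.2.2), Finset.mem_univ _, rfl⟩)))
    have heq : Gval p = Φval p - (∑ α, (a α p.1 : E) * (b α p.2.1 : E) * (c α p.2.2 : E)) := by
      rw [hGval, hΦval]
      simp only [hsum p.1 p.2.1 p.2.2, hRabc p.1 p.2.1 p.2.2]
      ring
    rw [heq]
    exact sub_mem hΦm hRmem
  obtain ⟨Bs, -, hBmax⟩ := exists_maximal_algebraicIndependent (∅ : Set E) (P ∪ ↑Ff)
    (Set.empty_subset _) (algebraicIndependent_empty (K := K) (A := E))
  have hBind : AlgebraicIndependent K (Subtype.val : Bs → E) := hBmax.prop.1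
  have hBsub : Bs ⊆ P ∪ ↑Ff := hBmax.prop.2
  have hdep : ∀ z ∈ P ∪ ↑Ff, IsAlgebraic ↥(IntermediateField.adjoin K Bs) z := by
    intro z hz
    by_cases hzB : z ∈ Bs
    · exact isAlg_of_mem (IntermediateField.subset_adjoin _ _ hzB)
    · have hnt : ¬ Transcendental ↥(Algebra.adjoin K Bs) z := by
        intro htrans
        have hins : AlgebraicIndependent K (Subtype.val : ↑(insert z Bs) → E) := by
          convert ((Subtype.range_coe ▸ hBind.option_iff_transcendental z).2 htrans).comp
            _ (Set.subtypeInsertEquivOption hzB).injective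
          ext x
          by_cases hx : ↑x = z <;> simp [hx, Set.subtypeInsertEquivOption]
        have hle := hBmax.2 ⟨hins, Set.insert_subset hz hBsub⟩ (Set.subset_insert z Bs)
        exact hzB (hle (Set.mem_insert z Bs))
      rw [Transcendental, not_not] at hnt
      exact isAlg_ring_to_field hnt
  have hGdep : ∀ p : {x // x ∈ u}, IsAlgebraic ↥(IntermediateField.adjoin K Bs) (Gval p.1) :=
    fun p => dep_trans hdep (isAlg_of_mem (hGmem p.1 p.2))
  by_cases hcase : ∃ Q : Finset E, ↑Q ⊆ Bs ∩ P ∧ t - 3 * n * s ≤ Q.card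
  · obtain ⟨Q0, hQ0sub, hQ0card⟩ := hcase
    obtain ⟨Q, hQQ0, hQcard⟩ := Finset.exists_subset_card_eq hQ0card
    have hQBP : (↑Q : Set E) ⊆ Bs ∩ P := subset_trans (Finset.coe_subset.mpr hQQ0) hQ0sub
    have hQP : (↑Q : Set E) ⊆ P := subset_trans hQBP Set.inter_subset_right
    have hQB : (↑Q : Set E) ⊆ Bs := subset_trans hQBP Set.inter_subset_left
    have hQind : AlgebraicIndependent K (Subtype.val : ↑(↑Q : Set E) → E) := hBind.mono hQB
    have hchoice : ∀ q : E, q ∈ Q → ∃ p : Fin n × Fin n × Fin n, p ∈ u ∧ Φval p = q := by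
      intro q hq
      obtain ⟨p, hp, hpe⟩ := hQP (Finset.mem_coe.mpr hq)
      exact ⟨p, hp, hpe⟩
    choose pick hpick hΦpick using hchoice
    refine ⟨Q.attach.image (fun q => pick q.1 q.2), ?_, ?_⟩
    · rw [Finset.card_image_of_injOn, Finset.card_attach, hQcard]
      intro q1 _ q2 _ h
      have h2 := congrArg Φval h
      have h3 : (q1 : E) = q2 := by
        simpa [hΦpick q1.1 q1.2, hΦpick q2.1 q2.2] using h2
      exact Subtype.ext h3
    · set u' : Finset (Fin n × Fin n × Fin n) := Q.attach.image (fun q => pick q.1 q.2) with hu'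
      have hτm : ∀ p : {x // x ∈ u'}, Φval p.1 ∈ (↑Q : Set E) := by
        intro p
        obtain ⟨q, hq, hpe⟩ := Finset.mem_image.mp p.2
        rw [← hpe, hΦpick q.1 q.2]
        exact Finset.mem_coe.mpr q.2
      set τ : {x // x ∈ u'} → ↑(↑Q : Set E) := fun p => ⟨Φval p.1, hτm p⟩ with hτ
      have hτinj : Function.Injective τ := by
        intro p1 p2 h
        have h' : Φval p1.1 = Φval p2.1 := congrArg Subtype.val h
        obtain ⟨q1, hq1, he1⟩ := Finset.mem_image.mp p1.2
        obtain ⟨q2, hq2, he2⟩ := Finset.mem_image.mp p2.2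
        have hq : q1 = q2 := by
          apply Subtype.ext
          rw [← hΦpick q1.1 q1.2, ← hΦpick q2.1 q2.2, he1, he2, h']
        apply Subtype.ext
        rw [← he1, ← he2, hq]
      exact hQind.comp τ hτinj
  · exfalso
    push_neg at hcase
    have hNpos : 0 < t - 3 * n * s := by
      have h0 := hcase ∅ (by simp)
      simpa using h0
    have hBP_fin : (Bs ∩ P).Finite := by
      by_contra hinf
      obtain ⟨Q, hQsub, hQcard⟩ := (Set.Infinite.exists_subset_card_eq hinf (t - 3 * n * s))
      have := hcase Q hQsub
      omega
    have hBPcard : hBP_fin.toFinset.card < t - 3 * n * s := by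
      refine hcase _ ?_
      rw [Set.Finite.coe_toFinset]
    have hBs_fin : Bs.Finite := by
      refine Set.Finite.subset (hBP_fin.union Ff.finite_toSet) ?_
      intro x hx
      rcases hBsub hx with h | h
      · exact Or.inl ⟨hx, h⟩
      · exact Or.inr h
    have hBfsub : hBs_fin.toFinset ⊆ hBP_fin.toFinset ∪ Ff := by
      intro x hx
      rw [Set.Finite.mem_toFinset] at hx
      rcases hBsub hx with h | h
      · exact Finset.mem_union_left _ (by rw [Set.Finite.mem_toFinset]; exact ⟨hx, h⟩)
      · exact Finset.mem_union_right _ (Finset.mem_coe.mp h)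
    have hBfcard : hBs_fin.toFinset.card + 1 ≤ t := by
      have h1 : hBs_fin.toFinset.card ≤ hBP_fin.toFinset.card + Ff.card :=
        le_trans (Finset.card_le_card hBfsub) (Finset.card_union_le _ _)
      omega
    set hemb : Fin (hBs_fin.toFinset.card + 1) → {x // x ∈ u} := fun i =>
      u.equivFin.symm (Fin.castLE (by omega) i) with hembdef
    have hembinj : Function.Injective hemb := by
      intro i j h
      rw [hembdef] at h
      exact Fin.castLE_injective _ (u.equivFin.symm.injective h)
    refine steinitz hBs_fin.toFinset.card hBs_fin.toFinset le_rfl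
      (fun i => Gval (hemb i).1) (fun i => ?_) (hGind.comp hemb hembinj)
    rw [Set.Finite.coe_toFinset]
    exact hGdep (hemb i)
end

section
/- Over any field F, if a tensor T has rank r, then the entries of T lie in a subfield generated over the prime field (together with any field containing the decomposition data) by at most 3nr elements for an n×n×n tensor; consequently, if the entries of an n×n×n tensor Φ are algebraically independent over a field K, then rank_{K'}(Φ) ≥ n²/3 for any field K' ⊇ K containing the entries of Φ. -/
theorem myIsAlgebraic_of_ringHom {E : Type*} [Field E] {R S : Type*} [CommRing R] [CommRing S]
    [Algebra R E] [Algebra S E] (f : R →+* S) (hf : Function.Injective f)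
    (hcomp : (algebraMap S E).comp f = algebraMap R E) {z : E}
    (hz : IsAlgebraic R z) : IsAlgebraic S z := by
  have := hz.ringHom_of_comp_eq f (RingHom.id E) hf
    (by ext x; exact DFunLike.congr_fun hcomp x)
  simpa using this

theorem mySubfield_le {E : Type*} [Field E] {A B : Subfield E} (h : A ≤ B) {z : E}
    (hz : IsAlgebraic A z) : IsAlgebraic B z :=
  myIsAlgebraic_of_ringHom (Subfield.inclusion h) (Subfield.inclusion h).injective
    (by ext x; rfl) hz

theorem myIF_toSubfield {E : Type*} [Field E] {F : Type*} [Field F] [Algebra F E]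
    (M : IntermediateField F E) {z : E} :
    IsAlgebraic M z ↔ IsAlgebraic M.toSubfield z := by
  constructor
  · refine fun h => myIsAlgebraic_of_ringHom (R := M)
      { toFun := fun x => ⟨x.1, x.2⟩, map_one' := rfl, map_mul' := fun _ _ => rfl,
        map_zero' := rfl, map_add' := fun _ _ => rfl } ?_ (by ext x; rfl) h
    exact fun a b hab => Subtype.ext (congrArg Subtype.val hab)
  · refine fun h => myIsAlgebraic_of_ringHom (R := M.toSubfield)
      { toFun := fun x => ⟨x.1, x.2⟩, map_one' := rfl, map_mul' := fun _ _ => rfl,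
        map_zero' := rfl, map_add' := fun _ _ => rfl } ?_ (by ext x; rfl) h
    exact fun a b hab => Subtype.ext (congrArg Subtype.val hab)

theorem myAdjoin_toSubfield {E : Type*} [Field E] (F : Type*) [Field F] [Algebra F E]
    (S : Set E) : (IntermediateField.adjoin F S).toSubfield
      = Subfield.closure (Set.range (algebraMap F E) ∪ S) := rfl

open IntermediateField

theorem myRange_algebraMap {E : Type*} [Field E] (A : Subfield E) :
    Set.range (algebraMap A E) = (A : Set E) := Subtype.range_coe

set_option maxHeartbeats 1000000 in
set_option synthInstance.maxHeartbeats 400000 in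
theorem myAbsorb {E : Type*} [Field E] (A : Subfield E) (S : Set E)
    (hS : ∀ y ∈ S, IsAlgebraic A y) {z : E}
    (hz : IsAlgebraic (Subfield.closure ((A : Set E) ∪ S)) z) : IsAlgebraic A z := by
  classical
  let M : IntermediateField A E := IntermediateField.adjoin A S
  have h1 : M.toSubfield = Subfield.closure (Set.range (algebraMap A E) ∪ S) := rfl
  have hMsub : M.toSubfield = Subfield.closure ((A : Set E) ∪ S) := by
    rw [h1, myRange_algebraMap]
  have halg : Algebra.IsAlgebraic A M :=
    IntermediateField.isAlgebraic_adjoin fun y hy => (isAlgebraic_iff_isIntegral).1 (hS y hy)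
  have hzM : IsAlgebraic M z := (myIF_toSubfield M).2 (hMsub ▸ hz)
  have : Algebra.IsIntegral A M := Algebra.isAlgebraic_iff_isIntegral.1 halg
  exact (isIntegral_trans z (isAlgebraic_iff_isIntegral.1 hzM)).isAlgebraic

open Polynomial in
set_option maxHeartbeats 1000000 in
theorem myFrac {E : Type*} [Field E] {F : Type*} [Field F] [Algebra F E] (S : Set E) {z : E}
    (hz : IsAlgebraic (IntermediateField.adjoin F S) z) :
    IsAlgebraic (Algebra.adjoin F S) z := by
  classical
  set L := IntermediateField.adjoin F S with hL
  obtain ⟨p, hp0, hpz⟩ := hz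
  set P : E[X] := p.map (algebraMap L E) with hP
  have hP0 : P ≠ 0 := by
    simpa [hP] using (Polynomial.map_ne_zero_iff (algebraMap L E).injective).2 hp0
  have hPz : P.eval z = 0 := by
    rw [hP, ← Polynomial.eval₂_eq_eval_map, ← Polynomial.aeval_def, hpz]
  have hmem : ∀ i : ℕ, ∃ u v : E, u ∈ Algebra.adjoin F S ∧ v ∈ Algebra.adjoin F S ∧ v ≠ 0 ∧
      P.coeff i = u / v := by
    intro i
    have hci : P.coeff i ∈ L := by
      rw [hP, Polynomial.coeff_map]; exact (p.coeff i).2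
    rw [hL, IntermediateField.mem_adjoin_iff] at hci
    obtain ⟨r, s, hrs⟩ := hci
    have hr : MvPolynomial.aeval (Subtype.val : S → E) r ∈ Algebra.adjoin F S := by
      have := Algebra.adjoin_range_eq_range_aeval F (Subtype.val : S → E)
      rw [Subtype.range_coe] at this
      rw [this]; exact ⟨r, rfl⟩
    have hs : MvPolynomial.aeval (Subtype.val : S → E) s ∈ Algebra.adjoin F S := by
      have := Algebra.adjoin_range_eq_range_aeval F (Subtype.val : S → E)
      rw [Subtype.range_coe] at this
      rw [this]; exact ⟨s, rfl⟩
    by_cases h0 : MvPolynomial.aeval (Subtype.val : S → E) s = 0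
    · exact ⟨0, 1, Subalgebra.zero_mem _, Subalgebra.one_mem _, one_ne_zero,
        by rw [hrs, h0, div_zero, zero_div]⟩
    · exact ⟨_, _, hr, hs, h0, hrs⟩
  choose u v hu hv hvne hc using hmem
  set D : E := ∏ i ∈ P.support, v i with hD
  have hDne : D ≠ 0 := Finset.prod_ne_zero_iff.2 fun i _ => hvne i
  set Q : E[X] := Polynomial.C D * P with hQ
  have hQ0 : Q ≠ 0 := mul_ne_zero (by simpa using hDne) hP0
  have hQz : Q.eval z = 0 := by rw [hQ, Polynomial.eval_mul, hPz, mul_zero]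
  have hQc : ∀ i : ℕ, Q.coeff i ∈ Algebra.adjoin F S := by
    intro i
    rw [hQ, Polynomial.coeff_C_mul]
    by_cases hi : i ∈ P.support
    · have h1 : D = (∏ j ∈ P.support.erase i, v j) * v i :=
        (Finset.prod_erase_mul _ _ hi).symm
      have h2 : v i * (u i / v i) = u i := by
        rw [mul_div_assoc', mul_comm, mul_div_assoc, div_self (hvne i), mul_one]
      have : D * P.coeff i = (∏ j ∈ P.support.erase i, v j) * u i := by
        rw [hc i, h1, mul_assoc, h2]
      rw [this]
      exact mul_mem (Subalgebra.prod_mem _ fun j _ => hv j) (hu i)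
    · rw [Polynomial.notMem_support_iff.1 hi, mul_zero]
      exact Subalgebra.zero_mem _
  set T : Subring E := (Algebra.adjoin F S).toSubring
  have hQcoeffs : ↑Q.coeffs ⊆ (T : Set E) := by
    intro w hw
    simp only [Polynomial.coeffs, Finset.coe_image, Set.mem_image] at hw
    obtain ⟨i, _, rfl⟩ := hw
    exact hQc i
  set q : T[X] := Q.toSubring T hQcoeffs with hq
  have hq0 : q ≠ 0 := by
    intro h
    apply hQ0
    rw [← Polynomial.map_toSubring Q T hQcoeffs, ← hq, h, Polynomial.map_zero]
  have hqz : Polynomial.aeval z q = 0 := by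
    have : Polynomial.aeval z q = (q.map (Subring.subtype T)).eval z := by
      rw [Polynomial.aeval_def, Polynomial.eval₂_eq_eval_map]; rfl
    rw [this, Polynomial.map_toSubring Q T hQcoeffs, hQz]
  have hT : IsAlgebraic T z := ⟨q, hq0, hqz⟩
  exact myIsAlgebraic_of_ringHom (R := T)
    { toFun := fun x => ⟨x.1, x.2⟩, map_one' := rfl, map_mul' := fun _ _ => rfl,
      map_zero' := rfl, map_add' := fun _ _ => rfl }
    (fun a b hab => Subtype.ext (congrArg Subtype.val hab)) (by ext x; rfl) hT

theorem myIndepTranscendental {K E ι : Type*} [Field K] [Field E] [Algebra K E] {x : ι → E}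
    (hx : AlgebraicIndependent K x) (T : Set ι) {i : ι} (hi : i ∉ T) :
    Transcendental (IntermediateField.adjoin K (x '' T)) (x i) := by
  classical
  have hy : AlgebraicIndependent K (fun t : T => x t) :=
    hx.comp Subtype.val Subtype.val_injective
  have ginj : Function.Injective (fun o : Option T => o.elim i Subtype.val) := by
    intro o1 o2 h
    cases o1 with
    | none => cases o2 with
      | none => rfl
      | some t2 => exact absurd ((show i = (t2 : ι) from h) ▸ t2.2) hi
    | some t1 => cases o2 with
      | none => exact absurd ((show (t1 : ι) = i from h).symm ▸ t1.2) hi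
      | some t2 => exact congrArg some (Subtype.ext h)
  have hgx : AlgebraicIndependent K (x ∘ fun o : Option T => o.elim i Subtype.val) :=
    hx.comp _ ginj
  have hopt : AlgebraicIndependent K
      (fun o : Option T => o.elim (x i) (fun t : T => x t)) := by
    convert hgx using 1
    funext o; cases o <;> rfl
  have htr : Transcendental (Algebra.adjoin K (Set.range fun t : T => x t)) (x i) :=
    (hy.option_iff_transcendental (x i)).1 hopt
  rw [← Set.image_eq_range] at htr
  exact fun halg => htr (myFrac _ halg)

theorem myExchange {E F : Type*} [Field E] [Field F] [Algebra F E] {a b : E}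
    (ha : Transcendental F a) (hab : IsAlgebraic (IntermediateField.adjoin F {b}) a) :
    IsAlgebraic (IntermediateField.adjoin F {a}) b := by
  by_contra hb
  have hbA : Transcendental (Algebra.adjoin F ({a} : Set E)) b := fun h => hb
    (myIsAlgebraic_of_ringHom
      (Subalgebra.inclusion (IntermediateField.algebra_adjoin_le_adjoin F ({a} : Set E)))
      (Subalgebra.inclusion_injective
        (IntermediateField.algebra_adjoin_le_adjoin F ({a} : Set E))) (by ext x; rfl) h)
  have hu : AlgebraicIndependent F (fun _ : Unit => a) :=
    algebraicIndependent_unique_type_iff.2 ha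
  have hpair : AlgebraicIndependent F (fun o : Option Unit => o.elim b (fun _ : Unit => a)) :=
    (hu.option_iff_transcendental b).2 (by rw [Set.range_const]; exact hbA)
  have hv : AlgebraicIndependent F (fun _ : Unit => b) := by
    have h := hpair.comp (fun _ : Unit => none) (fun _ _ _ => rfl)
    exact h
  have hswap : AlgebraicIndependent F (fun o : Option Unit => o.elim a (fun _ : Unit => b)) := by
    have h := hpair.comp (fun o : Option Unit => o.elim (some ()) (fun _ => none))
      (fun o1 o2 h => by cases o1 <;> cases o2 <;> simp_all)
    convert h using 1
    funext o
    cases o <;> rfl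
  have htr : Transcendental (Algebra.adjoin F (Set.range (fun _ : Unit => b))) a :=
    (hv.option_iff_transcendental a).1 hswap
  rw [Set.range_const] at htr
  exact htr (myFrac {b} hab)

section Glue
variable {K E : Type*} [Field K] [Field E] [Algebra K E]

theorem myIFle {M M' : IntermediateField K E} (h : M ≤ M') {z : E}
    (hz : IsAlgebraic M z) : IsAlgebraic M' z :=
  myIsAlgebraic_of_ringHom (IntermediateField.inclusion h).toRingHom
    (IntermediateField.inclusion_injective h) (by ext x; rfl) hz

theorem myMono {S S' : Set E} (h : S ⊆ S') {z : E}
    (hz : IsAlgebraic (IntermediateField.adjoin K S) z) :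
    IsAlgebraic (IntermediateField.adjoin K S') z :=
  myIFle (IntermediateField.adjoin.mono K S S' h) hz

theorem myMem {M : IntermediateField K E} {z : E} (h : z ∈ M) : IsAlgebraic M z :=
  ⟨Polynomial.X - Polynomial.C ⟨z, h⟩, Polynomial.X_sub_C_ne_zero _, by simp⟩

theorem myRangeIF (M : IntermediateField K E) :
    Set.range (algebraMap M E) = (M : Set E) := Subtype.range_coe

theorem mySubIF (S : Set E) :
    ((IntermediateField.adjoin K S : IntermediateField K E) : Set E)
      = (Subfield.closure (Set.range (algebraMap K E) ∪ S) : Set E) := rfl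

theorem myRangeK_sub (S : Set E) :
    Set.range (algebraMap K E) ⊆ ((IntermediateField.adjoin K S : IntermediateField K E) : Set E) :=
  fun _ ⟨k, hk⟩ => hk ▸ IntermediateField.algebraMap_mem _ k

theorem myAbsorbK (U S : Set E) (hS : ∀ y ∈ S, IsAlgebraic (IntermediateField.adjoin K U) y)
    {z : E} (hz : IsAlgebraic (IntermediateField.adjoin K (U ∪ S)) z) :
    IsAlgebraic (IntermediateField.adjoin K U) z := by
  set A := (IntermediateField.adjoin K U : IntermediateField K E).toSubfield with hA
  have hle : (IntermediateField.adjoin K (U ∪ S) : IntermediateField K E).toSubfield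
      ≤ Subfield.closure ((A : Set E) ∪ S) := by
    rw [myAdjoin_toSubfield]
    apply Subfield.closure_le.2
    apply Set.union_subset
    · intro w hw
      exact Subfield.subset_closure (Set.mem_union_left _ (myRangeK_sub U hw))
    · apply Set.union_subset
      · intro w hw
        exact Subfield.subset_closure
          (Set.mem_union_left _ (IntermediateField.subset_adjoin K U hw))
      · intro w hw
        exact Subfield.subset_closure (Set.mem_union_right _ hw)
  have hz' : IsAlgebraic (Subfield.closure ((A : Set E) ∪ S)) z :=
    mySubfield_le hle ((myIF_toSubfield _).1 hz)
  exact (myIF_toSubfield _).2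
    (myAbsorb A S (fun y hy => (myIF_toSubfield _).1 (hS y hy)) hz')

theorem myEqUp (A : Set E) (w : E) :
    (IntermediateField.adjoin (↥(IntermediateField.adjoin K A)) ({w} : Set E)).toSubfield
      = (IntermediateField.adjoin K (A ∪ {w}) : IntermediateField K E).toSubfield := by
  rw [myAdjoin_toSubfield, myAdjoin_toSubfield, myRangeIF]
  apply le_antisymm
  · apply Subfield.closure_le.2
    apply Set.union_subset
    · intro v hv
      have h1 : (IntermediateField.adjoin K A : IntermediateField K E)
          ≤ IntermediateField.adjoin K (A ∪ {w}) :=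
        IntermediateField.adjoin.mono K _ _ Set.subset_union_left
      exact h1 hv
    · intro v hv
      exact Subfield.subset_closure (Set.mem_union_right _ (Set.mem_union_right _ hv))
  · apply Subfield.closure_le.2
    apply Set.union_subset
    · intro v hv
      exact Subfield.subset_closure (Set.mem_union_left _ (myRangeK_sub A hv))
    · apply Set.union_subset
      · intro v hv
        exact Subfield.subset_closure
          (Set.mem_union_left _ (IntermediateField.subset_adjoin K A hv))
      · intro v hv
        exact Subfield.subset_closure (Set.mem_union_right _ hv)

theorem myUp {A : Set E} {w z : E}
    (hz : IsAlgebraic (IntermediateField.adjoin K (A ∪ {w})) z) :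
    IsAlgebraic (IntermediateField.adjoin (↥(IntermediateField.adjoin K A)) ({w} : Set E)) z := by
  have h := (myIF_toSubfield _).1 hz
  rw [← myEqUp A w] at h
  exact (myIF_toSubfield _).2 h

theorem myDown {A : Set E} {w z : E}
    (hz : IsAlgebraic (IntermediateField.adjoin (↥(IntermediateField.adjoin K A))
      ({w} : Set E)) z) :
    IsAlgebraic (IntermediateField.adjoin K (A ∪ {w})) z := by
  have h := (myIF_toSubfield _).1 hz
  rw [myEqUp A w] at h
  exact (myIF_toSubfield _).2 h

end Glue

set_option maxHeartbeats 2000000 in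
theorem myPick {K E : Type*} [Field K] [Field E] [Algebra K E] [DecidableEq E] (B : Set E) {z : E}
    (hzt : Transcendental (IntermediateField.adjoin K B) z) :
    ∀ v : Finset E, IsAlgebraic (IntermediateField.adjoin K (B ∪ ↑v)) z →
    ∃ y ∈ v, y ∉ B ∧
      IsAlgebraic (IntermediateField.adjoin K ((B ∪ {z}) ∪ ↑(v.erase y))) y := by
  classical
  intro v
  induction v using Finset.induction_on with
  | empty =>
    intro h
    exact absurd (myMono (by simp) h) hzt
  | @insert y₀ v' hy₀ IH =>
    intro halg
    by_cases hcase : IsAlgebraic (IntermediateField.adjoin K (B ∪ ↑v')) z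
    · obtain ⟨y, hyv, hyB, hy⟩ := IH hcase
      refine ⟨y, Finset.mem_insert_of_mem hyv, hyB, myMono ?_ hy⟩
      exact Set.union_subset (Set.subset_union_left)
        ((Finset.coe_subset.2 (Finset.erase_subset_erase y
          (Finset.subset_insert y₀ v'))).trans Set.subset_union_right)
    · have h1 : IsAlgebraic (IntermediateField.adjoin K ((B ∪ ↑v') ∪ {y₀})) z := by
        refine myMono ?_ halg
        intro w hw
        rcases hw with hw | hw
        · exact Or.inl (Or.inl hw)
        · rcases Finset.mem_insert.1 hw with rfl | hw
          · exact Or.inr rfl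
          · exact Or.inl (Or.inr hw)
      have hup := myUp (K := K) (A := B ∪ ↑v') h1
      have hex := myExchange hcase hup
      have hdown := myDown (K := K) (A := B ∪ ↑v') hex
      have hy₀B : y₀ ∉ B := by
        intro hB
        apply hcase
        refine myMono ?_ h1
        intro w hw
        rcases hw with hw | hw
        · exact hw
        · rcases hw with rfl
          exact Or.inl hB
      refine ⟨y₀, Finset.mem_insert_self _ _, hy₀B, ?_⟩
      rw [Finset.erase_insert hy₀]
      refine myMono ?_ hdown
      intro w hw
      rcases hw with hw | hw
      · rcases hw with hw | hw
        · exact Or.inl (Or.inl hw)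
        · exact Or.inr hw
      · rcases hw with rfl
        exact Or.inl (Or.inr rfl)

set_option maxHeartbeats 2000000 in
theorem myKey {K E ι : Type*} [Field K] [Field E] [Algebra K E] [Fintype ι] {x : ι → E}
    (hx : AlgebraicIndependent K x) (s : Finset E)
    (hs : ∀ i, IsAlgebraic (IntermediateField.adjoin K (↑s : Set E)) (x i)) :
    Fintype.card ι ≤ s.card := by
  classical
  have main : ∀ T : Finset ι, ∃ u : Finset E, u.card = s.card ∧
      (∀ y ∈ s, IsAlgebraic (IntermediateField.adjoin K (↑u : Set E)) y) ∧
      ∀ i ∈ T, x i ∈ u := by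
    intro T
    induction T using Finset.induction_on with
    | empty =>
      exact ⟨s, rfl, fun y hy => myMem (IntermediateField.subset_adjoin _ _ hy), by simp⟩
    | @insert i T hiT IH =>
      obtain ⟨u, hcard, hualg, hxu⟩ := IH
      have hxall : ∀ k, IsAlgebraic (IntermediateField.adjoin K (↑u : Set E)) (x k) := by
        intro k
        have h1 : IsAlgebraic (IntermediateField.adjoin K ((↑u : Set E) ∪ (↑s : Set E)))
            (x k) := myMono (S := (↑s : Set E)) (S' := (↑u : Set E) ∪ (↑s : Set E))
          Set.subset_union_right (hs k)
        exact myAbsorbK (↑u : Set E) (↑s : Set E) hualg h1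
      by_cases hz : x i ∈ u
      · refine ⟨u, hcard, hualg, ?_⟩
        intro k hk
        rcases Finset.mem_insert.1 hk with rfl | hk
        · exact hz
        · exact hxu k hk
      · have hzt : Transcendental (IntermediateField.adjoin K (x '' ↑T)) (x i) :=
          myIndepTranscendental hx ↑T hiT
        have hTu : (x '' ↑T) ⊆ ↑u := by
          rintro _ ⟨k, hk, rfl⟩; exact hxu k hk
        have halg' : IsAlgebraic (IntermediateField.adjoin K ((x '' ↑T) ∪ ↑u)) (x i) :=
          myMono Set.subset_union_right (hxall i)
        obtain ⟨y, hyu, hyB, hy⟩ := myPick (x '' ↑T) hzt u halg'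
        have hne : ∀ k ∈ T, x k ≠ y := by
          intro k hk h
          exact hyB ⟨k, hk, h⟩
        have hTu' : (x '' ↑T) ⊆ ↑(u.erase y) := by
          rintro _ ⟨k, hk, rfl⟩
          exact Finset.mem_coe.2 (Finset.mem_erase.2 ⟨hne k hk, hxu k hk⟩)
        refine ⟨insert (x i) (u.erase y), ?_, ?_, ?_⟩
        · have h1 : x i ∉ u.erase y := fun h => hz (Finset.mem_of_mem_erase h)
          have h2 : 1 ≤ u.card := Finset.card_pos.2 ⟨y, hyu⟩
          rw [Finset.card_insert_of_notMem h1, Finset.card_erase_of_mem hyu]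
          omega
        · have hmem' : ∀ w ∈ u, IsAlgebraic
              (IntermediateField.adjoin K (↑(insert (x i) (u.erase y)) : Set E)) w := by
            intro w hw
            by_cases hwy : w = y
            · subst hwy
              refine myMono ?_ hy
              intro w' hw'
              rcases hw' with hw' | hw'
              · rcases hw' with hw' | hw'
                · exact Finset.mem_coe.2 (Finset.mem_insert_of_mem (hTu' hw'))
                · rcases hw' with rfl
                  exact Finset.mem_coe.2 (Finset.mem_insert_self _ _)
              · exact Finset.mem_coe.2 (Finset.mem_insert_of_mem hw')
            · exact myMem (IntermediateField.subset_adjoin _ _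
                (Finset.mem_coe.2 (Finset.mem_insert_of_mem (Finset.mem_erase.2 ⟨hwy, hw⟩))))
          intro y' hy'
          have h2 : IsAlgebraic (IntermediateField.adjoin K
              ((↑(insert (x i) (u.erase y)) : Set E) ∪ (↑u : Set E))) y' :=
            myMono (S := (↑u : Set E))
              (S' := (↑(insert (x i) (u.erase y)) : Set E) ∪ (↑u : Set E))
              Set.subset_union_right (hualg y' hy')
          exact myAbsorbK (↑(insert (x i) (u.erase y)) : Set E) (↑u : Set E) hmem' h2
        · intro k hk
          rcases Finset.mem_insert.1 hk with rfl | hk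
          · exact Finset.mem_insert_self _ _
          · exact Finset.mem_insert_of_mem (Finset.mem_erase.2 ⟨hne k hk, hxu k hk⟩)
  obtain ⟨u, hcard, _, hall⟩ := main Finset.univ
  have hinj : Set.InjOn x ↑(Finset.univ : Finset ι) := fun a _ b _ h => hx.injective h
  have hle : (Finset.univ : Finset ι).card ≤ u.card :=
    Finset.card_le_card_of_injOn x (fun k _ => hall k (Finset.mem_univ k)) hinj
  rw [Finset.card_univ, hcard] at hle
  exact hle


set_option maxHeartbeats 2000000 in
/-- (a) If an `n×n×n` tensor `Φ` admits a rank-`r` decomposition, then its entries lie in the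
subfield generated by at most `3nr` elements (the decomposition data). (b) Consequently, if
the `n³` entries of `Φ` are algebraically independent over a field `K`, then for every field
`K'` containing `K` and the entries of `Φ`, the rank of `Φ` over `K'` is at least `n²/3`. -/
theorem rank_lower_bound_of_independent_entries {K E : Type*} [Field K] [Field E]
    [Algebra K E] {n : ℕ} (Φ : Fin n → Fin n → Fin n → E)
    (K' : Subfield E) (hK : Set.range (algebraMap K E) ⊆ K')
    (hent : ∀ i j k, Φ i j k ∈ K') :
    (∀ r : ℕ, ∀ a b c : Fin r → Fin n → E,
      (∀ i j k, Φ i j k = ∑ t, a t i * b t j * c t k) →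
        ∃ s : Finset E, s.card ≤ 3 * n * r ∧
          ∀ i j k, Φ i j k ∈ Subfield.closure (s : Set E)) ∧
    (AlgebraicIndependent K (fun p : Fin n × Fin n × Fin n => Φ p.1 p.2.1 p.2.2) →
      n ^ 2 ≤ 3 * sInf {r | ∃ a b c : Fin r → Fin n → K',
        ∀ i j k, Φ i j k = ∑ t, (a t i : E) * (b t j : E) * (c t k : E)}) := by
  classical
  have parta : ∀ r : ℕ, ∀ a b c : Fin r → Fin n → E,
      (∀ i j k, Φ i j k = ∑ t, a t i * b t j * c t k) →
        ∃ s : Finset E, s.card ≤ 3 * n * r ∧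
          ∀ i j k, Φ i j k ∈ Subfield.closure (s : Set E) := by
    intro r a b c hdec
    set sa := Finset.image (fun p : Fin r × Fin n => a p.1 p.2) Finset.univ with hsa
    set sb := Finset.image (fun p : Fin r × Fin n => b p.1 p.2) Finset.univ with hsb
    set sc := Finset.image (fun p : Fin r × Fin n => c p.1 p.2) Finset.univ with hsc
    refine ⟨sa ∪ sb ∪ sc, ?_, ?_⟩
    · have h1 : sa.card ≤ r * n := by
        simpa using (Finset.card_image_le (s := (Finset.univ : Finset (Fin r × Fin n)))
          (f := fun p => a p.1 p.2))
      have h2 : sb.card ≤ r * n := by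
        simpa using (Finset.card_image_le (s := (Finset.univ : Finset (Fin r × Fin n)))
          (f := fun p => b p.1 p.2))
      have h3 : sc.card ≤ r * n := by
        simpa using (Finset.card_image_le (s := (Finset.univ : Finset (Fin r × Fin n)))
          (f := fun p => c p.1 p.2))
      have h4 := Finset.card_union_le (sa ∪ sb) sc
      have h5 := Finset.card_union_le sa sb
      have h6 : 3 * n * r = r * n + (r * n + r * n) := by ring
      omega
    · intro i j k
      rw [hdec i j k]
      refine Subfield.sum_mem _ ?_
      intro t _
      refine Subfield.mul_mem _ (Subfield.mul_mem _ ?_ ?_) ?_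
      · exact Subfield.subset_closure (Finset.mem_coe.2 (Finset.mem_union_left _
          (Finset.mem_union_left _ (Finset.mem_image.2 ⟨(t, i), Finset.mem_univ _, rfl⟩))))
      · exact Subfield.subset_closure (Finset.mem_coe.2 (Finset.mem_union_left _
          (Finset.mem_union_right _ (Finset.mem_image.2 ⟨(t, j), Finset.mem_univ _, rfl⟩))))
      · exact Subfield.subset_closure (Finset.mem_coe.2 (Finset.mem_union_right _
          (Finset.mem_image.2 ⟨(t, k), Finset.mem_univ _, rfl⟩)))
  refine ⟨parta, ?_⟩
  intro hAI
  set R : Set ℕ := {r | ∃ a b c : Fin r → Fin n → K',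
    ∀ i j k, Φ i j k = ∑ t, (a t i : E) * (b t j : E) * (c t k : E)} with hR
  have hne : n * n ∈ R := by
    refine ⟨fun t i => ⟨Φ i (finProdFinEquiv.symm t).1 (finProdFinEquiv.symm t).2, hent _ _ _⟩,
      fun t j => if (finProdFinEquiv.symm t).1 = j then 1 else 0,
      fun t k => if (finProdFinEquiv.symm t).2 = k then 1 else 0, ?_⟩
    intro i j k
    rw [← Equiv.sum_comp (finProdFinEquiv : Fin n × Fin n ≃ Fin (n * n))]
    symm
    trans (∑ p : Fin n × Fin n, if p = (j, k) then Φ i j k else 0)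
    · refine Finset.sum_congr rfl fun p _ => ?_
      rcases p with ⟨p1, p2⟩
      by_cases h1 : p1 = j <;> by_cases h2 : p2 = k <;>
        simp [h1, h2, Prod.ext_iff, apply_ite ((↑) : K' → E)]
    · rw [Finset.sum_ite_eq' Finset.univ (j, k)]
      simp
  have hmemInf : sInf R ∈ R := Nat.sInf_mem ⟨n * n, hne⟩
  obtain ⟨a, b, c, hdec⟩ := hmemInf
  obtain ⟨s, hcard, hmem⟩ := parta (sInf R) (fun t i => (a t i : E)) (fun t j => (b t j : E))
    (fun t k => (c t k : E)) hdec
  have hs : ∀ p : Fin n × Fin n × Fin n,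
      IsAlgebraic (IntermediateField.adjoin K (↑s : Set E)) (Φ p.1 p.2.1 p.2.2) := by
    intro p
    have h1 : Φ p.1 p.2.1 p.2.2 ∈ Subfield.closure (Set.range (algebraMap K E) ∪ (↑s : Set E)) :=
      Subfield.closure_mono Set.subset_union_right (hmem p.1 p.2.1 p.2.2)
    have h2 : Φ p.1 p.2.1 p.2.2 ∈ (IntermediateField.adjoin K (↑s : Set E) :
        IntermediateField K E) := h1
    exact myMem h2
  have hkey := myKey hAI s hs
  have hcardP : Fintype.card (Fin n × Fin n × Fin n) = n * (n * n) := by simp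
  rw [hcardP] at hkey
  have hfin : n * (n * n) ≤ 3 * n * sInf R := le_trans hkey hcard
  rcases Nat.eq_zero_or_pos n with hn | hn
  · subst hn; simp
  · have h7 : n * (n * n) = n * (n * n) := rfl
    have h8 : 3 * n * sInf R = n * (3 * sInf R) := by ring
    rw [h8] at hfin
    have := Nat.le_of_mul_le_mul_left hfin hn
    calc n ^ 2 = n * n := sq n
    _ ≤ 3 * sInf R := this
end
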